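/- arXiv:2109.11298 — 5 statements merged into one kernel-verified Lean document; each statement's English description precedes it below -/
import Mathlib

section
/- For $p = 1/2$, the sequence $\hat{a}_n = \Gamma(n)/\Gamma(n+1/2)$ satisfies $\lim_{n\to\infty} \frac{1}{\log n} \sum_{k=1}^n \hat{a}_k^2 = 1$. -/
open Filter Finset Real Nat Topology

noncomputable def hata (k : ℕ) : ℝ := Real.Gamma k / Real.Gamma (k + 1/2)

lemma hata_eq (m : ℕ) :
    hata (m + 1) = ((m+1) ! : ℝ)^2 * 4^(m+1) / ((m+1) * ((2*(m+1)) ! : ℝ) * √π) := by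
  have hdup := Real.Gamma_mul_Gamma_add_half (((m+1:ℕ)) : ℝ)
  have h1 : Real.Gamma ((m+1:ℕ) : ℝ) = m ! := by
    push_cast
    exact Real.Gamma_nat_eq_factorial m
  have h2 : Real.Gamma (2 * ((m+1:ℕ) : ℝ)) = (2*m+1) ! := by
    have : 2 * ((m+1:ℕ) : ℝ) = ((2*m+1 : ℕ) : ℝ) + 1 := by push_cast; ring
    rw [this, Real.Gamma_nat_eq_factorial]
  have hpow : (2:ℝ) ^ ((1:ℝ) - 2 * ((m+1:ℕ) : ℝ)) = 2 / 4 ^ (m+1) := by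
    rw [Real.rpow_sub two_pos, Real.rpow_one]
    congr 1
    have : (2 : ℝ) * ((m+1:ℕ) : ℝ) = ((2*(m+1) : ℕ) : ℝ) := by push_cast; ring
    rw [this, Real.rpow_natCast, pow_mul]
    norm_num
  rw [h1, h2, hpow] at hdup
  have hm : (m ! : ℝ) ≠ 0 := by positivity
  have hG : Real.Gamma (((m+1:ℕ):ℝ) + 1/2) =
      ((2*m+1) ! : ℝ) * (2 / 4 ^ (m+1)) * √π / m ! := by
    field_simp at hdup ⊢
    linarith [hdup]
  unfold hata
  rw [h1, hG]
  have hfac : ((2*(m+1)) ! : ℝ) = (2*m+2) * (2*m+1) ! := by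
    have : 2*(m+1) = (2*m+1) + 1 := by ring
    rw [this, Nat.factorial_succ]
    push_cast; ring
  have hfac2 : ((m+1) ! : ℝ) = (m+1) * m ! := by
    rw [Nat.factorial_succ]; push_cast; ring
  have hsq : √π ≠ 0 := by positivity
  have h4 : (4:ℝ)^(m+1) ≠ 0 := by positivity
  have hf : ((2*m+1) ! : ℝ) ≠ 0 := by positivity
  rw [hfac, hfac2]
  field_simp

lemma key_eq (m : ℕ) : ((m+1 : ℕ) : ℝ) * hata (m+1) ^ 2 =
    Real.Wallis.W (m+1) * ((2*((m+1:ℕ):ℝ)+1) / (((m+1:ℕ):ℝ) * π)) := by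
  rw [hata_eq, Real.Wallis.W_eq_factorial_ratio]
  have h4 : (4:ℝ)^(m+1) = 2^(2*(m+1)) := by
    rw [show (4:ℝ) = 2^2 by norm_num, ← pow_mul]
  have h16 : ((4:ℝ)^(m+1))^2 = 2^(4*(m+1)) := by
    rw [h4, ← pow_mul]; ring_nf
  have hsq : (√π)^2 = π := Real.sq_sqrt pi_pos.le
  have hk : ((m+1:ℕ):ℝ) ≠ 0 := by positivity
  have hB : ((2*(m+1)) ! : ℝ) ≠ 0 := by positivity
  have hπ : (π:ℝ) ≠ 0 := pi_ne_zero
  have hs : √π ≠ 0 := by positivity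
  have h2k : (2*((m+1:ℕ):ℝ)+1) ≠ 0 := by positivity
  push_cast at *
  field_simp
  rw [← h16]
  ring_nf
  rw [hsq]

lemma tendsto_k_hata_sq : Tendsto (fun k : ℕ => (k:ℝ) * hata k ^ 2) atTop (𝓝 1) := by
  rw [← tendsto_add_atTop_iff_nat 1]
  have h1 : Tendsto (fun m : ℕ => Real.Wallis.W (m+1)) atTop (𝓝 (π/2)) :=
    Real.Wallis.tendsto_W_nhds_pi_div_two.comp (tendsto_add_atTop_nat 1)
  have h2 : Tendsto (fun m : ℕ => (2*((m+1:ℕ):ℝ)+1) / (((m+1:ℕ):ℝ) * π)) atTop (𝓝 (2/π)) := by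
    have hx : Tendsto (fun m : ℕ => ((m+1:ℕ):ℝ)) atTop atTop :=
      tendsto_natCast_atTop_atTop.comp (tendsto_add_atTop_nat 1)
    have hinv : Tendsto (fun m : ℕ => (((m+1:ℕ):ℝ))⁻¹) atTop (𝓝 0) := hx.inv_tendsto_atTop
    have heq : ∀ m : ℕ, (2*((m+1:ℕ):ℝ)+1) / (((m+1:ℕ):ℝ) * π) =
        (2 + (((m+1:ℕ):ℝ))⁻¹) / π := by
      intro m
      have : ((m+1:ℕ):ℝ) ≠ 0 := by positivity
      field_simp
    simp_rw [heq]
    have := (hinv.const_add 2).div_const π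
    simpa using this
  have hmul := h1.mul h2
  have hlim : π/2 * (2/π) = 1 := by field_simp
  rw [hlim] at hmul
  exact hmul.congr (fun m => (key_eq m).symm)

lemma littleo_hata : (fun k : ℕ => hata k ^ 2 - (k:ℝ)⁻¹) =o[atTop] (fun k : ℕ => (k:ℝ)⁻¹) := by
  have h : Tendsto (fun k : ℕ => (k:ℝ) * hata k ^ 2 - 1) atTop (𝓝 0) := by
    simpa using tendsto_k_hata_sq.sub_const 1
  have h1 : (fun k : ℕ => (k:ℝ) * hata k ^ 2 - 1) =o[atTop] (fun _ : ℕ => (1:ℝ)) :=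
    (Asymptotics.isLittleO_one_iff ℝ).2 h
  have h2 := h1.mul_isBigO (Asymptotics.isBigO_refl (fun k : ℕ => (k:ℝ)⁻¹) atTop)
  refine h2.congr' ?_ ?_
  · filter_upwards [eventually_ge_atTop 1] with k hk
    have hk0 : (k:ℝ) ≠ 0 := by positivity
    field_simp
  · filter_upwards with k
    simp


lemma hata_zero : hata 0 = 0 := by
  unfold hata
  simp [Real.Gamma_zero]

lemma sum_Icc_eq (n : ℕ) :
    ∑ k ∈ Finset.Icc 1 n, hata k ^ 2 = ∑ k ∈ Finset.range (n+1), hata k ^ 2 := by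
  rw [Finset.range_eq_Ico, Finset.sum_eq_sum_Ico_succ_bot (Nat.succ_pos n), hata_zero,
    Nat.succ_eq_add_one, Finset.Ico_add_one_right_eq_Icc]
  simp

lemma range_inv_sum (n : ℕ) :
    ∑ i ∈ Finset.range (n+1), ((i:ℝ))⁻¹ = (harmonic n : ℝ) := by
  induction n with
  | zero => simp [harmonic]
  | succ n ih => rw [Finset.sum_range_succ, ih, harmonic_succ]; push_cast; ring

lemma tendsto_harm : Tendsto (fun n : ℕ => (harmonic n : ℝ)) atTop atTop := by
  have h2 : Tendsto (fun n : ℕ => Real.log n) atTop atTop :=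
    Real.tendsto_log_atTop.comp tendsto_natCast_atTop_atTop
  have := Real.tendsto_harmonic_sub_log.add_atTop h2
  simpa using this

lemma tendsto_G : Tendsto (fun n : ℕ => ∑ i ∈ Finset.range n, ((i:ℝ))⁻¹) atTop atTop := by
  rw [← tendsto_add_atTop_iff_nat 1]
  exact (tendsto_congr fun n => range_inv_sum n).2 tendsto_harm

lemma sum_littleo : (fun n => ∑ i ∈ Finset.range n, (hata i ^ 2 - (i:ℝ)⁻¹)) =o[atTop]
    (fun n => ∑ i ∈ Finset.range n, ((i:ℝ))⁻¹) :=
  Asymptotics.IsLittleO.sum_range littleo_hata (fun i => by positivity) tendsto_G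

lemma tendsto_ratio : Tendsto (fun n : ℕ =>
    (∑ i ∈ Finset.range (n+1), (hata i ^ 2 - (i:ℝ)⁻¹)) / (harmonic n : ℝ)) atTop (𝓝 0) := by
  have h := sum_littleo.tendsto_div_nhds_zero
  rw [← tendsto_add_atTop_iff_nat 1] at h
  exact h.congr fun n => by rw [range_inv_sum]

lemma tendsto_harm_log :
    Tendsto (fun n : ℕ => (harmonic n : ℝ) / Real.log n) atTop (𝓝 1) := by
  have h2 : Tendsto (fun n : ℕ => (Real.log n)⁻¹) atTop (𝓝 0) :=
    (Real.tendsto_log_atTop.comp tendsto_natCast_atTop_atTop).inv_tendsto_atTop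
  have h3 := Real.tendsto_harmonic_sub_log.mul h2
  have h4 : Tendsto (fun n : ℕ => ((harmonic n : ℝ) - Real.log n) * (Real.log n)⁻¹ + 1)
      atTop (𝓝 1) := by
    simpa using h3.add_const 1
  apply h4.congr'
  filter_upwards [eventually_ge_atTop 2] with n hn
  have h1n : (1:ℝ) < n := by exact_mod_cast Nat.lt_of_lt_of_le one_lt_two hn
  have hL : Real.log n ≠ 0 := (Real.log_pos h1n).ne'
  field_simp
  ring

/-- for `p = 1/2`, with `âₙ = Γ(n)/Γ(n+1/2)`,
`(1/log n) ∑_{k=1}^n âₖ² → 1`. -/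
theorem sum_sq_hata_critical_asymptotic :
    Tendsto
      (fun n : ℕ => (1 / Real.log n) *
        ∑ k ∈ Finset.Icc 1 n, (Real.Gamma k / Real.Gamma (k + 1 / 2)) ^ 2)
      atTop (nhds 1) := by
  have h1 := tendsto_ratio
  have h2 := tendsto_harm_log
  have h3 : Tendsto (fun n : ℕ =>
      ((∑ i ∈ Finset.range (n+1), (hata i ^ 2 - (i:ℝ)⁻¹)) / (harmonic n : ℝ)) *
        ((harmonic n : ℝ) / Real.log n) + (harmonic n : ℝ) / Real.log n)
      atTop (𝓝 (0 * 1 + 1)) := (h1.mul h2).add h2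
  rw [show (0:ℝ) * 1 + 1 = 1 by norm_num] at h3
  apply h3.congr'
  filter_upwards [eventually_ge_atTop 1] with n hn
  have hH : (0:ℝ) < (harmonic n : ℝ) := by exact_mod_cast harmonic_pos (by omega)
  have hT : ∑ k ∈ Finset.Icc 1 n, (Real.Gamma k / Real.Gamma (k + 1 / 2)) ^ 2
      = (∑ i ∈ Finset.range (n+1), (hata i ^ 2 - (i:ℝ)⁻¹)) + (harmonic n : ℝ) := by
    rw [Finset.sum_sub_distrib, range_inv_sum]
    have h5 : ∑ k ∈ Finset.Icc 1 n, (Real.Gamma k / Real.Gamma (k + 1 / 2)) ^ 2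
        = ∑ i ∈ Finset.range (n+1), hata i ^ 2 := by
      rw [← sum_Icc_eq]
      rfl
    rw [h5]
    ring
  rw [hT]
  rcases eq_or_ne (Real.log n) 0 with hL | hL
  · simp [hL]
  · field_simp [hH.ne']
end

section
/- Suppose $X$ is centred, bounded ($\|X\|_\infty < \infty$), and $p \in (0, 1/2)$. Then the positively step-reinforced random walk satisfies the strong law of large numbers $\lim_{n\to\infty} \hat{S}_n / n^{1-p} = 0$ almost surely. -/
open MeasureTheory ProbabilityTheory Filter Finset
open scoped NNReal ENNReal Topology

noncomputable def aSeq (p : ℝ) : ℕ → ℝ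
  | 0 => 1
  | 1 => 1
  | (n+2) => aSeq p (n+1) * (((n+1 : ℕ) : ℝ) / (((n+1 : ℕ) : ℝ) + p))

lemma aSeq_succ (p : ℝ) {n : ℕ} (hn : 1 ≤ n) :
    aSeq p (n+1) = aSeq p n * ((n : ℝ) / ((n : ℝ) + p)) := by
  obtain ⟨m, rfl⟩ : ∃ m, n = m + 1 := ⟨n - 1, (Nat.succ_pred_eq_of_pos hn).symm⟩
  rfl

lemma aSeq_pos {p : ℝ} (hp : 0 < p) : ∀ n, 0 < aSeq p n
  | 0 => one_pos
  | 1 => one_pos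
  | (n+2) => by
      have h := aSeq_pos hp (n+1)
      have hn : (0:ℝ) < ((n+1 : ℕ) : ℝ) := by positivity
      rw [aSeq_succ p (Nat.le_add_left 1 n)]
      exact mul_pos h (div_pos hn (by linarith))

lemma aSeq_le {p : ℝ} (hp0 : 0 < p) (hp1 : p < 1) :
    ∀ n : ℕ, 1 ≤ n → aSeq p n ≤ (n : ℝ) ^ (-p) := by
  intro n hn
  induction n, hn using Nat.le_induction with
  | base => simp [aSeq]
  | succ n hn ih =>
    have hA : (0:ℝ) < (n:ℝ) := by exact_mod_cast hn
    have hB : (0:ℝ) < (n:ℝ) + 1 := by linarith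
    have hAp : (0:ℝ) < (n:ℝ) + p := by linarith
    have key : ((n:ℝ)) ^ (1 - p) * ((n:ℝ) + 1) ^ p ≤ (n:ℝ) + p := by
      have := Real.geom_mean_le_arith_mean2_weighted (by linarith : (0:ℝ) ≤ 1 - p)
        hp0.le hA.le (by linarith : (0:ℝ) ≤ (n:ℝ) + 1) (by ring)
      calc ((n:ℝ)) ^ (1 - p) * ((n:ℝ) + 1) ^ p ≤ (1 - p) * n + p * ((n:ℝ) + 1) := this
        _ = (n:ℝ) + p := by ring
    have step : (n:ℝ) ^ (-p) * ((n:ℝ) / ((n:ℝ) + p)) ≤ ((n:ℝ) + 1) ^ (-p) := by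
      rw [Real.rpow_neg hB.le, ← one_div]
      rw [mul_div_assoc']
      rw [div_le_div_iff₀ hAp (Real.rpow_pos_of_pos hB p)]
      have heq : (n:ℝ) ^ (-p) * (n:ℝ) = (n:ℝ) ^ (1 - p) := by
        nth_rewrite 2 [← Real.rpow_one (n:ℝ)]
        rw [← Real.rpow_add hA]; ring_nf
      rw [heq]
      calc (n:ℝ) ^ (1 - p) * ((n:ℝ) + 1) ^ p ≤ (n:ℝ) + p := key
        _ = 1 * ((n:ℝ) + p) := by ring
    calc aSeq p (n+1) = aSeq p n * ((n:ℝ) / ((n:ℝ) + p)) := aSeq_succ p hn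
      _ ≤ (n:ℝ) ^ (-p) * ((n:ℝ) / ((n:ℝ) + p)) := by
          apply mul_le_mul_of_nonneg_right ih
          positivity
      _ ≤ ((n:ℝ) + 1) ^ (-p) := step
      _ = ((n+1 : ℕ) : ℝ) ^ (-p) := by push_cast; ring_nf

lemma aSeq_ge_aux {p : ℝ} (hp0 : 0 < p) (hp1 : p < 1) :
    ∀ n : ℕ, 1 ≤ n → (n : ℝ) ^ (-p) / (1 + p) ≤ aSeq p (n+1) := by
  intro n hn
  induction n, hn using Nat.le_induction with
  | base =>
    have h2 := aSeq_succ p (le_refl 1)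
    simp only [Nat.cast_one] at h2
    rw [h2]
    simp [aSeq, Real.one_rpow]
  | succ n hn ih =>
    have hA : (0:ℝ) < (n:ℝ) := by exact_mod_cast hn
    have hB : (0:ℝ) < (n:ℝ) + 1 := by linarith
    have h1p : (0:ℝ) < 1 + p := by linarith
    -- key2 : (n+1+p) * n^p ≤ (n+1)^(1+p)
    have key2 : ((n:ℝ) + 1 + p) * (n:ℝ) ^ p ≤ ((n:ℝ) + 1) ^ ((1:ℝ) + p) := by
      have hgm := Real.geom_mean_le_arith_mean2_weighted
        (by positivity : (0:ℝ) ≤ 1 / (1+p)) (by positivity : (0:ℝ) ≤ p / (1+p))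
        (by linarith : (0:ℝ) ≤ (n:ℝ) + 1 + p) hA.le (by field_simp)
      have hsum : (1/(1+p)) * ((n:ℝ) + 1 + p) + (p/(1+p)) * (n:ℝ) = (n:ℝ) + 1 := by
        field_simp; ring
      rw [hsum] at hgm
      have hpow := Real.rpow_le_rpow (by positivity) hgm (by linarith : (0:ℝ) ≤ 1 + p)
      calc ((n:ℝ) + 1 + p) * (n:ℝ) ^ p
          = (((n:ℝ) + 1 + p) ^ ((1:ℝ)/(1+p)) * (n:ℝ) ^ (p/(1+p))) ^ ((1:ℝ) + p) := by
            rw [Real.mul_rpow (by positivity) (by positivity),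
              ← Real.rpow_mul (by linarith : (0:ℝ) ≤ (n:ℝ) + 1 + p),
              ← Real.rpow_mul hA.le]
            rw [show (1:ℝ)/(1+p) * (1+p) = 1 by field_simp,
              show p/(1+p) * (1+p) = p by field_simp]
            rw [Real.rpow_one]
        _ ≤ ((n:ℝ) + 1) ^ ((1:ℝ) + p) := hpow
    have step : ((n:ℝ) + 1) ^ (-p) * ((n:ℝ) + 1 + p) ≤ (n:ℝ) ^ (-p) * ((n:ℝ) + 1) := by
      rw [Real.rpow_neg hB.le, Real.rpow_neg hA.le, ← one_div, ← one_div]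
      rw [div_mul_eq_mul_div, div_mul_eq_mul_div, one_mul, one_mul]
      rw [div_le_div_iff₀ (Real.rpow_pos_of_pos hB p) (Real.rpow_pos_of_pos hA p)]
      calc ((n:ℝ) + 1 + p) * (n:ℝ) ^ p ≤ ((n:ℝ) + 1) ^ ((1:ℝ) + p) := key2
        _ = ((n:ℝ) + 1) * ((n:ℝ) + 1) ^ p := by
            rw [Real.rpow_add hB, Real.rpow_one]
    have hrec : aSeq p (n+1+1) = aSeq p (n+1) * (((n:ℝ)+1) / (((n:ℝ)+1) + p)) := by
      have := aSeq_succ p (Nat.le_add_left 1 n)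
      push_cast at this ⊢
      convert this using 3 <;> push_cast <;> ring
    rw [hrec]
    have hBp : (0:ℝ) < (n:ℝ) + 1 + p := by linarith
    calc ((n+1:ℕ):ℝ) ^ (-p) / (1 + p)
        = (((n:ℝ)+1) ^ (-p) * ((n:ℝ)+1+p)) / ((1+p) * ((n:ℝ)+1+p)) := by
          push_cast
          rw [mul_div_mul_right _ _ (ne_of_gt hBp)]
      _ ≤ ((n:ℝ) ^ (-p) * ((n:ℝ)+1)) / ((1+p) * ((n:ℝ)+1+p)) := by
          apply (div_le_div_iff_of_pos_right (by positivity : (0:ℝ) < (1+p) * ((n:ℝ)+1+p))).mpr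
          exact step
      _ = ((n:ℝ) ^ (-p) / (1+p)) * (((n:ℝ)+1) / (((n:ℝ)+1) + p)) := by
          field_simp
      _ ≤ aSeq p (n+1) * (((n:ℝ)+1) / (((n:ℝ)+1) + p)) := by
          apply mul_le_mul_of_nonneg_right ih
          positivity

lemma aSeq_ge {p : ℝ} (hp0 : 0 < p) (hp1 : p < 1) :
    ∀ n : ℕ, 1 ≤ n → (n : ℝ) ^ (-p) / (1 + p) ≤ aSeq p n := by
  intro n hn
  rcases n with _ | _ | m
  · omega
  · have h1 : aSeq p 1 = 1 := rfl
    rw [h1]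
    push_cast
    rw [Real.one_rpow]
    rw [div_le_one (by linarith)]
    linarith
  · have hm1 : 1 ≤ m + 1 := Nat.le_add_left 1 m
    have h := aSeq_ge_aux hp0 hp1 (m+1) hm1
    refine le_trans ?_ h
    apply (div_le_div_iff_of_pos_right (by linarith : (0:ℝ) < 1 + p)).mpr
    apply Real.rpow_le_rpow_of_nonpos (by positivity) ?_ (by linarith)
    push_cast
    linarith

lemma sum_telescope_Ico (f : ℕ → ℝ) : ∀ (a n : ℕ), a ≤ n →
    ∑ k ∈ Finset.Ico a n, (f (k+1) - f k) = f n - f a := by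
  intro a n h
  induction n, h using Nat.le_induction with
  | base => simp
  | succ n hn ih =>
    rw [Finset.sum_Ico_succ_top hn, ih]
    ring

lemma kronecker_rpow {q : ℝ} (hq : 0 < q) (v : ℕ → ℝ) (L : ℝ)
    (hT : Tendsto (fun n => ∑ k ∈ Finset.Ico 1 n, v k / (k:ℝ) ^ q) atTop (nhds L)) :
    Tendsto (fun n => (∑ k ∈ Finset.Ico 1 n, v k) / (n:ℝ) ^ q) atTop (nhds 0) := by
  set T : ℕ → ℝ := fun n => ∑ k ∈ Finset.Ico 1 n, v k / (k:ℝ) ^ q with hTdef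
  set R : ℕ → ℝ := fun n => ∑ k ∈ Finset.Ico 1 n, v k with hRdef
  set B : ℕ → ℝ := fun n => (n:ℝ) ^ q with hBdef
  have hBpos : ∀ n : ℕ, 1 ≤ n → 0 < B n := fun n hn =>
    Real.rpow_pos_of_pos (by exact_mod_cast hn : (0:ℝ) < n) q
  have hBnonneg : ∀ n : ℕ, 0 ≤ B n := fun n => Real.rpow_nonneg (Nat.cast_nonneg n) q
  have hBmono : ∀ m n : ℕ, m ≤ n → B m ≤ B n := fun m n h =>
    Real.rpow_le_rpow (Nat.cast_nonneg m) (by exact_mod_cast h) hq.le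
  have hBtop : Tendsto B atTop atTop :=
    (tendsto_rpow_atTop hq).comp tendsto_natCast_atTop_atTop
  have hstep : ∀ k : ℕ, 1 ≤ k → v k = B k * (T (k+1) - T k) := by
    intro k hk
    have h1 : T (k+1) = T k + v k / B k := Finset.sum_Ico_succ_top hk _
    rw [h1]
    rw [add_sub_cancel_left, mul_div_assoc', mul_div_cancel_left₀ _ (hBpos k hk).ne']
  have key : ∀ K : ℕ, 1 ≤ K → ∀ n : ℕ, K ≤ n →
      R (n+1) - R K = B n * (T (n+1) - L) - B K * (T K - L)
        - ∑ k ∈ Finset.Ico K n, (B (k+1) - B k) * (T (k+1) - L) := by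
    intro K hK n hn
    induction n, hn using Nat.le_induction with
    | base =>
      rw [show R (K+1) = R K + v K from Finset.sum_Ico_succ_top hK _]
      rw [Finset.Ico_self, Finset.sum_empty, hstep K hK]
      ring
    | succ n hn ih =>
      have hn1 : 1 ≤ n + 1 := Nat.le_add_left 1 n
      rw [show R (n+1+1) = R (n+1) + v (n+1) from
        Finset.sum_Ico_succ_top (le_trans hK (Nat.le_succ_of_le hn)) _]
      rw [Finset.sum_Ico_succ_top hn]
      rw [hstep (n+1) hn1]
      linear_combination ih
  rw [Metric.tendsto_atTop] at hT ⊢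
  intro ε hε
  have hε8 : 0 < ε/8 := by linarith
  obtain ⟨K₀, hK₀⟩ := hT (ε/8) hε8
  set K := max K₀ 1 with hKdef
  have hK1 : 1 ≤ K := le_max_right _ _
  have hTK : ∀ n : ℕ, K ≤ n → |T n - L| ≤ ε/8 := by
    intro n hn
    have := hK₀ n (le_trans (le_max_left _ _) hn)
    rw [Real.dist_eq] at this
    exact this.le
  obtain ⟨K₁, hK₁⟩ := Filter.eventually_atTop.mp
    (hBtop.eventually_ge_atTop ((|R K| + B K * (ε/8)) / (ε/8)))
  refine ⟨max (K+1) K₁, fun n hn => ?_⟩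
  have hnK1 : K + 1 ≤ n := le_trans (le_max_left _ _) hn
  have hnK₁ : K₁ ≤ n := le_trans (le_max_right _ _) hn
  obtain ⟨m, rfl⟩ : ∃ m, n = m + 1 := ⟨n-1, by omega⟩
  have hmK : K ≤ m := by omega
  have hm1 : 1 ≤ m := le_trans hK1 hmK
  have hsum_bound : |∑ k ∈ Finset.Ico K m, (B (k+1) - B k) * (T (k+1) - L)|
      ≤ (B m - B K) * (ε/8) := by
    calc |∑ k ∈ Finset.Ico K m, (B (k+1) - B k) * (T (k+1) - L)|
        ≤ ∑ k ∈ Finset.Ico K m, |(B (k+1) - B k) * (T (k+1) - L)| :=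
          Finset.abs_sum_le_sum_abs _ _
      _ ≤ ∑ k ∈ Finset.Ico K m, (B (k+1) - B k) * (ε/8) := by
          apply Finset.sum_le_sum
          intro k hk
          rw [abs_mul]
          have h1 : 0 ≤ B (k+1) - B k := sub_nonneg.mpr (hBmono k (k+1) (Nat.le_succ k))
          rw [abs_of_nonneg h1]
          apply mul_le_mul_of_nonneg_left ?_ h1
          exact hTK (k+1) (le_trans (Finset.mem_Ico.mp hk).1 (Nat.le_succ k))
      _ = (B m - B K) * (ε/8) := by
          rw [← Finset.sum_mul, sum_telescope_Ico B K m hmK]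
  have h1 : |B m * (T (m+1) - L)| ≤ B m * (ε/8) := by
    rw [abs_mul, abs_of_nonneg (hBnonneg m)]
    exact mul_le_mul_of_nonneg_left (hTK (m+1) (by omega)) (hBnonneg m)
  have h2 : |B K * (T K - L)| ≤ B K * (ε/8) := by
    rw [abs_mul, abs_of_nonneg (hBnonneg K)]
    exact mul_le_mul_of_nonneg_left (hTK K le_rfl) (hBnonneg K)
  have hRd : |R (m+1) - R K| ≤ 2 * B m * (ε/8) := by
    rw [key K hK1 m hmK]
    have tri : ∀ x y z : ℝ, |x - y - z| ≤ |x| + |y| + |z| := by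
      intro x y z
      calc |x - y - z| ≤ |x - y| + |z| := abs_sub _ _
        _ ≤ |x| + |y| + |z| := by
            have := abs_sub x y
            linarith
    calc |B m * (T (m+1) - L) - B K * (T K - L)
          - ∑ k ∈ Finset.Ico K m, (B (k+1) - B k) * (T (k+1) - L)|
        ≤ |B m * (T (m+1) - L)| + |B K * (T K - L)|
          + |∑ k ∈ Finset.Ico K m, (B (k+1) - B k) * (T (k+1) - L)| := tri _ _ _
      _ ≤ B m * (ε/8) + B K * (ε/8) + (B m - B K) * (ε/8) := by
          linarith [h1, h2, hsum_bound]
      _ = 2 * B m * (ε/8) := by ring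
  have hR : |R (m+1)| ≤ |R K| + 2 * B m * (ε/8) := by
    calc |R (m+1)| = |R K + (R (m+1) - R K)| := by ring_nf
      _ ≤ |R K| + |R (m+1) - R K| := abs_add_le _ _
      _ ≤ |R K| + 2 * B m * (ε/8) := by linarith
  have hBm1pos : 0 < B (m+1) := hBpos (m+1) (by omega)
  have hBK₁ : (|R K| + B K * (ε/8)) / (ε/8) ≤ B (m+1) := hK₁ (m+1) (by omega)
  have hnum : |R K| + B K * (ε/8) ≤ (ε/8) * B (m+1) := by
    rw [div_le_iff₀ hε8] at hBK₁
    linarith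
  rw [Real.dist_eq, sub_zero, abs_div, abs_of_nonneg (hBnonneg (m+1))]
  rw [div_lt_iff₀ hBm1pos]
  have hBmle : B m ≤ B (m+1) := hBmono m (m+1) (Nat.le_succ m)
  have hBKnn := hBnonneg K
  calc |R (m+1)| ≤ |R K| + 2 * B m * (ε/8) := hR
    _ ≤ (ε/8) * B (m+1) + 2 * B (m+1) * (ε/8) := by nlinarith
    _ < ε * B (m+1) := by nlinarith

noncomputable def Shat {Ω : Type*} (X : ℕ → Ω → ℝ) (n : ℕ) (ω : Ω) : ℝ :=
  ∑ j ∈ Finset.Icc 1 n, X j ω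

noncomputable def DD {Ω : Type*} (p : ℝ) (X : ℕ → Ω → ℝ) (k : ℕ) (ω : Ω) : ℝ :=
  (aSeq p (k+1) / (k:ℝ) ^ (1-2*p)) * (X (k+1) ω - (p/(k:ℝ)) * Shat X k ω)

noncomputable def NN {Ω : Type*} (p : ℝ) (X : ℕ → Ω → ℝ) (n : ℕ) (ω : Ω) : ℝ :=
  ∑ k ∈ Finset.Ico 1 n, DD p X k ω

lemma Shat_succ {Ω : Type*} (X : ℕ → Ω → ℝ) (k : ℕ) (ω : Ω) :
    Shat X (k+1) ω = Shat X k ω + X (k+1) ω := by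
  have h1 : Finset.Icc 1 (k+1) = Finset.Ico 1 (k+2) := by rw [show k+2 = (k+1)+1 by rfl, Finset.Ico_add_one_right_eq_Icc]
  have h2 : Finset.Icc 1 k = Finset.Ico 1 (k+1) := by rw [Finset.Ico_add_one_right_eq_Icc]
  show ∑ j ∈ Finset.Icc 1 (k+1), X j ω = (∑ j ∈ Finset.Icc 1 k, X j ω) + X (k+1) ω
  rw [h1, h2, Finset.sum_Ico_succ_top (Nat.le_add_left 1 k)]

/-- strong law of large numbers for the positively step-reinforced
random walk with bounded centred steps and `p ∈ (0,1/2)`: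
`Ŝₙ / n^{1-p} → 0` almost surely. -/
theorem reinforced_strong_LLN_diffusive
    {Ω : Type*} {mΩ : MeasurableSpace Ω} (P : Measure Ω) [IsProbabilityMeasure P]
    (ℱ : Filtration ℕ mΩ)
    (p : ℝ) (hp : p ∈ Set.Ioo (0 : ℝ) (1 / 2))
    (hatX : ℕ → Ω → ℝ)
    (C : ℝ) (hbdd : ∀ n ω, |hatX n ω| ≤ C)
    (hadapt : Adapted ℱ hatX)
    (hcent : ∫ ω, hatX 1 ω ∂P = 0)
    (hcond : ∀ n : ℕ, 1 ≤ n →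
      P[hatX (n + 1) | ℱ n]
        =ᵐ[P] fun ω => (p / n) * ∑ j ∈ Finset.Icc 1 n, hatX j ω) :
    ∀ᵐ ω ∂P, Tendsto
      (fun n : ℕ => (∑ j ∈ Finset.Icc 1 n, hatX j ω) / (n : ℝ) ^ (1 - p))
      atTop (nhds 0) := by
  obtain ⟨hp0, hp2⟩ := hp
  rw [show (1:ℝ)/2 = 2⁻¹ by norm_num] at hp2
  have hp1 : p < 1 := by linarith
  have hq0 : (0:ℝ) < 1 - 2*p := by linarith
  have hΩ : Nonempty Ω := by
    by_contra h
    rw [not_nonempty_iff] at h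
    have h1 := measure_univ (μ := P)
    rw [Set.univ_eq_empty_iff.mpr h, measure_empty] at h1
    exact zero_ne_one h1
  have hC0 : 0 ≤ C := le_trans (abs_nonneg _) (hbdd 0 hΩ.some)
  -- measurability
  have hSsm : ∀ n, StronglyMeasurable[ℱ n] (Shat hatX n) := by
    intro n
    apply Finset.stronglyMeasurable_fun_sum
    intro j hj
    exact (hadapt j).stronglyMeasurable.mono (ℱ.mono (Finset.mem_Icc.mp hj).2)
  have hDsm : ∀ k, StronglyMeasurable[ℱ (k+1)] (DD p hatX k) := by
    intro k
    exact ((hadapt (k+1)).stronglyMeasurable.sub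
      (((hSsm k).mono (ℱ.mono (Nat.le_succ k))).const_mul _)).const_mul _
  have hDsm' : ∀ k, StronglyMeasurable (DD p hatX k) := fun k => (hDsm k).mono (ℱ.le _)
  have hNsm : ∀ n, StronglyMeasurable[ℱ n] (NN p hatX n) := by
    intro n
    apply Finset.stronglyMeasurable_fun_sum
    intro k hk
    exact (hDsm k).mono (ℱ.mono (Finset.mem_Ico.mp hk).2)
  have hNsm' : ∀ n, StronglyMeasurable (NN p hatX n) := fun n => (hNsm n).mono (ℱ.le _)
  -- bounds
  have hSb : ∀ n ω, |Shat hatX n ω| ≤ n * C := by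
    intro n ω
    calc |Shat hatX n ω| ≤ ∑ j ∈ Finset.Icc 1 n, |hatX j ω| :=
        Finset.abs_sum_le_sum_abs _ _
      _ ≤ ∑ j ∈ Finset.Icc 1 n, C := Finset.sum_le_sum fun j _ => hbdd j ω
      _ = ((Finset.Icc 1 n).card : ℝ) * C := by rw [Finset.sum_const, nsmul_eq_mul]
      _ = n * C := by rw [Nat.card_Icc]; simp
  have hDb : ∀ k : ℕ, 1 ≤ k → ∀ ω, |DD p hatX k ω| ≤ 2*C * (k:ℝ)^(p-1) := by
    intro k hk ω
    have hk0 : (0:ℝ) < (k:ℝ) := by exact_mod_cast hk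
    have h1 : |aSeq p (k+1) / (k:ℝ)^(1-2*p)| ≤ (k:ℝ)^(p-1) := by
      have ha1 : aSeq p (k+1) ≤ ((k+1:ℕ):ℝ)^(-p) := aSeq_le hp0 hp1 (k+1) (by omega)
      have ha2 : ((k+1:ℕ):ℝ)^(-p) ≤ (k:ℝ)^(-p) := by
        apply Real.rpow_le_rpow_of_nonpos hk0 (by push_cast; linarith) (by linarith)
      have hapos := aSeq_pos hp0 (k+1)
      have hbpos : (0:ℝ) < (k:ℝ)^(1-2*p) := Real.rpow_pos_of_pos hk0 _
      rw [abs_of_nonneg (div_nonneg hapos.le hbpos.le)]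
      rw [div_le_iff₀ hbpos]
      calc aSeq p (k+1) ≤ (k:ℝ)^(-p) := le_trans ha1 ha2
        _ = (k:ℝ)^(p-1) * (k:ℝ)^(1-2*p) := by
            rw [← Real.rpow_add hk0]; ring_nf
    have h2 : |hatX (k+1) ω - (p/(k:ℝ)) * Shat hatX k ω| ≤ 2*C := by
      have hs := hSb k ω
      have hx := hbdd (k+1) ω
      have h3 : |(p/(k:ℝ)) * Shat hatX k ω| ≤ p * C := by
        rw [abs_mul, abs_of_nonneg (by positivity : (0:ℝ) ≤ p/(k:ℝ))]
        calc p/(k:ℝ) * |Shat hatX k ω| ≤ p/(k:ℝ) * ((k:ℝ) * C) := by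
              apply mul_le_mul_of_nonneg_left hs (by positivity)
          _ = p * C := by field_simp
      calc |hatX (k+1) ω - (p/(k:ℝ)) * Shat hatX k ω|
          ≤ |hatX (k+1) ω| + |(p/(k:ℝ)) * Shat hatX k ω| := abs_sub _ _
        _ ≤ C + p * C := add_le_add hx h3
        _ ≤ 2*C := by nlinarith
    calc |DD p hatX k ω| = |aSeq p (k+1) / (k:ℝ)^(1-2*p)|
          * |hatX (k+1) ω - (p/(k:ℝ)) * Shat hatX k ω| := abs_mul _ _
      _ ≤ (k:ℝ)^(p-1) * (2*C) := by
          apply mul_le_mul h1 h2 (abs_nonneg _) (Real.rpow_nonneg hk0.le _)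
      _ = 2*C * (k:ℝ)^(p-1) := by ring
  have hDb2 : ∀ k ω, |DD p hatX k ω| ≤ 2*C := by
    intro k ω
    rcases Nat.eq_zero_or_pos k with rfl | hk
    · have h0 : DD p hatX 0 ω = 0 := by
        show (aSeq p 1 / ((0:ℕ):ℝ)^(1-2*p)) * _ = 0
        rw [Nat.cast_zero, Real.zero_rpow (by linarith), div_zero, zero_mul]
      rw [h0, abs_zero]; positivity
    · calc |DD p hatX k ω| ≤ 2*C * (k:ℝ)^(p-1) := hDb k hk ω
        _ ≤ 2*C * 1 := by
            apply mul_le_mul_of_nonneg_left ?_ (by positivity)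
            apply Real.rpow_le_one_of_one_le_of_nonpos
            · exact_mod_cast hk
            · linarith
        _ = 2*C := mul_one _
  have hNb : ∀ n ω, |NN p hatX n ω| ≤ n * (2*C) := by
    intro n ω
    calc |NN p hatX n ω| ≤ ∑ k ∈ Finset.Ico 1 n, |DD p hatX k ω| :=
        Finset.abs_sum_le_sum_abs _ _
      _ ≤ ∑ k ∈ Finset.Ico 1 n, (2*C) := Finset.sum_le_sum fun k _ => hDb2 k ω
      _ = ((Finset.Ico 1 n).card : ℝ) * (2*C) := by rw [Finset.sum_const, nsmul_eq_mul]
      _ ≤ n * (2*C) := by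
          apply mul_le_mul_of_nonneg_right ?_ (by positivity)
          rw [Nat.card_Ico]
          exact_mod_cast Nat.sub_le n 1
  -- integrability
  have hInt : ∀ (f : Ω → ℝ) (c : ℝ), StronglyMeasurable f → (∀ ω, |f ω| ≤ c) →
      Integrable f P := by
    intro f c hm hc
    apply Integrable.mono' (integrable_const c) hm.aestronglyMeasurable
    exact Filter.Eventually.of_forall fun ω => by rw [Real.norm_eq_abs]; exact hc ω
  have hXint : ∀ j, Integrable (hatX j) P :=
    fun j => hInt _ C ((hadapt j).stronglyMeasurable.mono (ℱ.le j)) (hbdd j)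
  have hSint : ∀ n, Integrable (Shat hatX n) P :=
    fun n => hInt _ (n*C) ((hSsm n).mono (ℱ.le n)) (hSb n)
  have hDint : ∀ k, Integrable (DD p hatX k) P := fun k => hInt _ (2*C) (hDsm' k) (hDb2 k)
  have hNint : ∀ n, Integrable (NN p hatX n) P :=
    fun n => hInt _ (n*(2*C)) (hNsm' n) (hNb n)
  -- conditional expectation of increments vanishes
  have hD0 : ∀ n : ℕ, 1 ≤ n → P[DD p hatX n|ℱ n] =ᵐ[P] 0 := by
    intro n hn
    have hGsm : StronglyMeasurable[ℱ n] (fun ω => (p/(n:ℝ)) * Shat hatX n ω) :=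
      (hSsm n).const_mul _
    have hGint : Integrable (fun ω => (p/(n:ℝ)) * Shat hatX n ω) P := (hSint n).const_mul _
    have hG : P[fun ω => (p/(n:ℝ)) * Shat hatX n ω|ℱ n]
        = fun ω => (p/(n:ℝ)) * Shat hatX n ω :=
      condExp_of_stronglyMeasurable (ℱ.le n) hGsm hGint
    have hsub : P[fun ω => hatX (n+1) ω - (p/(n:ℝ)) * Shat hatX n ω|ℱ n]
        =ᵐ[P] P[hatX (n+1)|ℱ n] - P[fun ω => (p/(n:ℝ)) * Shat hatX n ω|ℱ n] :=
      condExp_sub (hXint (n+1)) hGint _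
    have h0 : P[fun ω => hatX (n+1) ω - (p/(n:ℝ)) * Shat hatX n ω|ℱ n] =ᵐ[P] 0 := by
      refine hsub.trans ?_
      rw [hG]
      have h1 : P[hatX (n+1)|ℱ n] =ᵐ[P] fun ω => (p/(n:ℝ)) * Shat hatX n ω := hcond n hn
      filter_upwards [h1] with ω hω
      simp only [Pi.sub_apply, Pi.zero_apply, hω]
      ring
    have hDD : DD p hatX n = (aSeq p (n+1) / (n:ℝ)^(1-2*p))
        • fun ω => hatX (n+1) ω - (p/(n:ℝ)) * Shat hatX n ω := by
      funext ω; rfl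
    have hsmul : P[DD p hatX n|ℱ n] =ᵐ[P]
        (aSeq p (n+1) / (n:ℝ)^(1-2*p))
          • P[fun ω => hatX (n+1) ω - (p/(n:ℝ)) * Shat hatX n ω|ℱ n] := by
      rw [hDD]
      exact condExp_smul _ _ _
    refine hsmul.trans ?_
    filter_upwards [h0] with ω hω
    simp only [Pi.smul_apply, smul_eq_mul, hω, Pi.zero_apply, mul_zero]
  -- martingale
  have hNadapted : StronglyAdapted ℱ (NN p hatX) := hNsm
  have hmart : Martingale (NN p hatX) ℱ P := by
    apply martingale_nat hNadapted hNint
    intro i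
    rcases Nat.eq_zero_or_pos i with rfl | hi
    · have e0 : NN p hatX 0 = 0 := by funext ω; simp [NN]
      have e1 : NN p hatX 1 = 0 := by funext ω; simp [NN]
      rw [e0, e1, condExp_zero]
    · have hrec : NN p hatX (i+1) = NN p hatX i + DD p hatX i := by
        funext ω
        exact Finset.sum_Ico_succ_top hi _
      rw [hrec]
      have h1 := condExp_add (hNint i) (hDint i) (m := ℱ i) (μ := P)
      have h2 : P[NN p hatX i|ℱ i] = NN p hatX i :=
        condExp_of_stronglyMeasurable (ℱ.le i) (hNsm i) (hNint i)
      refine EventuallyEq.symm ?_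
      refine h1.trans ?_
      rw [h2]
      filter_upwards [hD0 i hi] with ω hω
      simp only [Pi.add_apply, hω, Pi.zero_apply, add_zero]
  -- second moments
  have hsq_int : ∀ (f : Ω → ℝ) (c : ℝ), StronglyMeasurable f → (∀ ω, |f ω| ≤ c) →
      Integrable (fun ω => (f ω)^2) P := by
    intro f c hm hc
    have h1 : Integrable (fun ω => f ω * f ω) P := by
      apply hInt _ (c*c) (hm.mul hm)
      intro ω
      show |f ω * f ω| ≤ c * c
      rw [abs_mul]
      exact mul_le_mul (hc ω) (hc ω) (abs_nonneg _) (le_trans (abs_nonneg _) (hc ω))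
    have h2 : (fun ω => (f ω)^2) = fun ω => f ω * f ω := by funext ω; ring
    rw [h2]; exact h1
  have hDsq_int : ∀ k, Integrable (fun ω => (DD p hatX k ω)^2) P :=
    fun k => hsq_int _ (2*C) (hDsm' k) (hDb2 k)
  have hED : ∀ n : ℕ, 1 ≤ n →
      ∫ ω, (DD p hatX n ω)^2 ∂P ≤ (2*C)^2 * (((n:ℝ)^(2-2*p))⁻¹) := by
    intro n hn
    have hn0 : (0:ℝ) < (n:ℝ) := by exact_mod_cast hn
    have e1 : ((n:ℝ)^(p-1))^2 = (n:ℝ)^(2*p-2) := by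
      rw [sq, ← Real.rpow_add hn0]; ring_nf
    have e2 : (((n:ℝ)^(2-2*p))⁻¹) = (n:ℝ)^(2*p-2) := by
      rw [← Real.rpow_neg hn0.le]; ring_nf
    have hstep1 : ∫ ω, (DD p hatX n ω)^2 ∂P ≤ ∫ _x : Ω, (2*C*(n:ℝ)^(p-1))^2 ∂P := by
      apply integral_mono (hDsq_int n) (integrable_const _)
      intro ω
      show (DD p hatX n ω)^2 ≤ (2*C*(n:ℝ)^(p-1))^2
      rw [← sq_abs (DD p hatX n ω)]
      exact pow_le_pow_left₀ (abs_nonneg _) (hDb n hn ω) 2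
    have hstep2 : (∫ _x : Ω, (2*C*(n:ℝ)^(p-1))^2 ∂P) = (2*C*(n:ℝ)^(p-1))^2 := by
      rw [integral_const]; simp
    have hstep3 : (2*C*(n:ℝ)^(p-1))^2 = (2*C)^2 * (((n:ℝ)^(2-2*p))⁻¹) := by
      rw [mul_pow, e1, e2]
    rw [← hstep3]
    exact hstep1.trans hstep2.le
  have hgrow : ∀ n : ℕ, ∫ ω, (NN p hatX n ω)^2 ∂P
      ≤ ∑ k ∈ Finset.Ico 1 n, ∫ ω, (DD p hatX k ω)^2 ∂P := by
    intro n
    induction n with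
    | zero =>
      have e0 : ∀ ω : Ω, NN p hatX 0 ω = 0 := fun ω => by simp [NN]
      simp [e0]
    | succ n ih =>
      rcases Nat.eq_zero_or_pos n with rfl | hn
      · have e1 : ∀ ω : Ω, NN p hatX 1 ω = 0 := fun ω => by simp [NN]
        simp [e1]
      · have hrec : ∀ ω, NN p hatX (n+1) ω = NN p hatX n ω + DD p hatX n ω :=
          fun ω => Finset.sum_Ico_succ_top hn _
        have hNDint : Integrable (fun ω => NN p hatX n ω * DD p hatX n ω) P := by
          apply hInt _ ((n*(2*C))*(2*C)) ((hNsm' n).mul (hDsm' n))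
          intro ω
          show |NN p hatX n ω * DD p hatX n ω| ≤ (n*(2*C))*(2*C)
          rw [abs_mul]
          exact mul_le_mul (hNb n ω) (hDb2 n ω) (abs_nonneg _) (by positivity)
        have hcross : ∫ ω, NN p hatX n ω * DD p hatX n ω ∂P = 0 := by
          have hpull := condExp_mul_of_stronglyMeasurable_left (hNsm n) hNDint (hDint n)
          calc ∫ ω, NN p hatX n ω * DD p hatX n ω ∂P
              = ∫ ω, (P[NN p hatX n * DD p hatX n|ℱ n]) ω ∂P :=
                (integral_condExp (ℱ.le n)).symm
            _ = ∫ ω, NN p hatX n ω * (P[DD p hatX n|ℱ n]) ω ∂P := by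
                apply integral_congr_ae
                filter_upwards [hpull] with ω hω
                exact hω
            _ = 0 := by
                have hz : (fun ω => NN p hatX n ω * (P[DD p hatX n|ℱ n]) ω) =ᵐ[P]
                    (fun _ => (0:ℝ)) := by
                  filter_upwards [hD0 n hn] with ω hω
                  simp only [Pi.zero_apply] at hω
                  simp [hω]
                rw [integral_congr_ae hz, integral_zero]
        have hNsq_int : Integrable (fun ω => (NN p hatX n ω)^2) P :=
          hsq_int _ (n*(2*C)) (hNsm' n) (hNb n)
        have hsum : ∫ ω, (NN p hatX (n+1) ω)^2 ∂P
            = ∫ ω, (NN p hatX n ω)^2 ∂P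
              + (2 * ∫ ω, NN p hatX n ω * DD p hatX n ω ∂P
                + ∫ ω, (DD p hatX n ω)^2 ∂P) := by
          have e : (fun ω => (NN p hatX (n+1) ω)^2)
              = fun ω => (NN p hatX n ω)^2
                + (2*(NN p hatX n ω * DD p hatX n ω) + (DD p hatX n ω)^2) := by
            funext ω; rw [hrec ω]; ring
          have hia : ∫ ω, ((NN p hatX n ω)^2
              + (2*(NN p hatX n ω * DD p hatX n ω) + (DD p hatX n ω)^2)) ∂P
              = (∫ ω, (NN p hatX n ω)^2 ∂P)
                + ∫ ω, (2*(NN p hatX n ω * DD p hatX n ω) + (DD p hatX n ω)^2) ∂P :=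
            integral_add hNsq_int ((hNDint.const_mul 2).add (hDsq_int n))
          have hib : ∫ ω, (2*(NN p hatX n ω * DD p hatX n ω) + (DD p hatX n ω)^2) ∂P
              = (∫ ω, 2*(NN p hatX n ω * DD p hatX n ω) ∂P)
                + ∫ ω, (DD p hatX n ω)^2 ∂P :=
            integral_add (hNDint.const_mul 2) (hDsq_int n)
          have hic : ∫ ω, 2*(NN p hatX n ω * DD p hatX n ω) ∂P
              = 2 * ∫ ω, NN p hatX n ω * DD p hatX n ω ∂P := integral_const_mul 2 _
          rw [e, hia, hib, hic]
        rw [Finset.sum_Ico_succ_top hn, hsum, hcross]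
        linarith [ih]
  have hsummable : Summable (fun k : ℕ => ((k:ℝ)^(2-2*p))⁻¹) :=
    Real.summable_nat_rpow_inv.mpr (by linarith)
  have hKbound : ∀ n, ∫ ω, (NN p hatX n ω)^2 ∂P
      ≤ (2*C)^2 * ∑' k : ℕ, ((k:ℝ)^(2-2*p))⁻¹ := by
    intro n
    refine le_trans (hgrow n) ?_
    calc ∑ k ∈ Finset.Ico 1 n, ∫ ω, (DD p hatX k ω)^2 ∂P
        ≤ ∑ k ∈ Finset.Ico 1 n, (2*C)^2 * ((k:ℝ)^(2-2*p))⁻¹ :=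
          Finset.sum_le_sum fun k hk => hED k (Finset.mem_Ico.mp hk).1
      _ = (2*C)^2 * ∑ k ∈ Finset.Ico 1 n, ((k:ℝ)^(2-2*p))⁻¹ := by rw [Finset.mul_sum]
      _ ≤ (2*C)^2 * ∑' k : ℕ, ((k:ℝ)^(2-2*p))⁻¹ := by
          apply mul_le_mul_of_nonneg_left ?_ (by positivity)
          exact Summable.sum_le_tsum _ (fun i _ => by positivity) hsummable
  set Kc : ℝ := (2*C)^2 * ∑' k : ℕ, ((k:ℝ)^(2-2*p))⁻¹ with hKc
  have habs : ∀ n, ∫ ω, |NN p hatX n ω| ∂P ≤ (1 + Kc)/2 := by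
    intro n
    have hNsq_int : Integrable (fun ω => (NN p hatX n ω)^2) P :=
      hsq_int _ (n*(2*C)) (hNsm' n) (hNb n)
    have h1 : ∀ ω, |NN p hatX n ω| ≤ (1 + (NN p hatX n ω)^2)/2 := by
      intro ω
      nlinarith [sq_abs (NN p hatX n ω), sq_nonneg (|NN p hatX n ω| - 1),
        abs_nonneg (NN p hatX n ω)]
    calc ∫ ω, |NN p hatX n ω| ∂P ≤ ∫ ω, (1 + (NN p hatX n ω)^2)/2 ∂P := by
          apply integral_mono (hNint n).abs ?_ h1
          exact ((integrable_const 1).add hNsq_int).div_const 2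
      _ = (1 + ∫ ω, (NN p hatX n ω)^2 ∂P)/2 := by
          rw [integral_div, integral_add (integrable_const 1) hNsq_int]
          simp
      _ ≤ (1 + Kc)/2 := by linarith [hKbound n]
  have hbddL1 : ∀ n, eLpNorm (NN p hatX n) 1 P ≤ ((1 + Kc)/2).toNNReal := by
    intro n
    rw [eLpNorm_one_eq_lintegral_enorm, ← ofReal_integral_norm_eq_lintegral_enorm (hNint n)]
    have hco : ((((1 + Kc)/2).toNNReal : ℝ≥0) : ℝ≥0∞) = ENNReal.ofReal ((1 + Kc)/2) := rfl
    rw [hco]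
    apply ENNReal.ofReal_le_ofReal
    have hnorm : (∫ ω, ‖NN p hatX n ω‖ ∂P) = ∫ ω, |NN p hatX n ω| ∂P := rfl
    rw [hnorm]
    exact habs n
  have hconv := hmart.submartingale.ae_tendsto_limitProcess hbddL1
  filter_upwards [hconv] with ω hω
  have hT : Tendsto (fun n : ℕ => ∑ k ∈ Finset.Ico 1 n,
      ((k:ℝ)^(1-2*p) * DD p hatX k ω) / (k:ℝ)^(1-2*p)) atTop
      (nhds (ℱ.limitProcess (NN p hatX) P ω)) := by
    apply Tendsto.congr ?_ hω
    intro n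
    apply Finset.sum_congr rfl
    intro k hk
    have hk1 : 1 ≤ k := (Finset.mem_Ico.mp hk).1
    have hk0 : ((k:ℝ))^(1-2*p) ≠ 0 :=
      ne_of_gt (Real.rpow_pos_of_pos (by exact_mod_cast hk1) _)
    exact (mul_div_cancel_left₀ _ hk0).symm
  have hkron := kronecker_rpow hq0 (fun k => (k:ℝ)^(1-2*p) * DD p hatX k ω) _ hT
  have htel : ∀ k : ℕ, 1 ≤ k → (k:ℝ)^(1-2*p) * DD p hatX k ω
      = aSeq p (k+1) * Shat hatX (k+1) ω - aSeq p k * Shat hatX k ω := by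
    intro k hk
    have hk0 : (0:ℝ) < (k:ℝ) := by exact_mod_cast hk
    have hkq : (0:ℝ) < (k:ℝ)^(1-2*p) := Real.rpow_pos_of_pos hk0 _
    have hkp : (0:ℝ) < (k:ℝ) + p := by linarith
    have hrec := aSeq_succ p hk
    rw [Shat_succ hatX k ω]
    rw [show DD p hatX k ω = (aSeq p (k+1) / (k:ℝ)^(1-2*p))
      * (hatX (k+1) ω - (p/(k:ℝ)) * Shat hatX k ω) from rfl]
    rw [hrec]
    field_simp
    ring
  have hsumv : ∀ n : ℕ, 1 ≤ n →
      ∑ k ∈ Finset.Ico 1 n, (k:ℝ)^(1-2*p) * DD p hatX k ω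
        = aSeq p n * Shat hatX n ω - aSeq p 1 * Shat hatX 1 ω := by
    intro n hn
    rw [← sum_telescope_Ico (fun m => aSeq p m * Shat hatX m ω) 1 n hn]
    exact Finset.sum_congr rfl fun k hk => htel k (Finset.mem_Ico.mp hk).1
  have hMtend : Tendsto (fun n : ℕ => (aSeq p n * Shat hatX n ω)/(n:ℝ)^(1-2*p))
      atTop (nhds 0) := by
    have h1 : Tendsto (fun n : ℕ =>
        (aSeq p n * Shat hatX n ω - aSeq p 1 * Shat hatX 1 ω)/(n:ℝ)^(1-2*p))
        atTop (nhds 0) := by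
      apply hkron.congr'
      filter_upwards [eventually_ge_atTop 1] with n hn
      rw [hsumv n hn]
    have h2 : Tendsto (fun n : ℕ => (aSeq p 1 * Shat hatX 1 ω)/(n:ℝ)^(1-2*p))
        atTop (nhds 0) :=
      Tendsto.div_atTop tendsto_const_nhds
        ((tendsto_rpow_atTop hq0).comp tendsto_natCast_atTop_atTop)
    have h3 := h1.add h2
    rw [add_zero] at h3
    apply h3.congr
    intro n
    rw [← add_div, sub_add_cancel]
  have hg : Tendsto (fun n : ℕ =>
      (1+p) * |(aSeq p n * Shat hatX n ω)/(n:ℝ)^(1-2*p)|) atTop (nhds 0) := by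
    have := hMtend.abs.const_mul (1+p)
    simpa using this
  have hbound : ∀ᶠ n : ℕ in atTop, |Shat hatX n ω / (n:ℝ)^(1-p)|
      ≤ (1+p) * |(aSeq p n * Shat hatX n ω)/(n:ℝ)^(1-2*p)| := by
    filter_upwards [eventually_ge_atTop 1] with n hn
    have hn0 : (0:ℝ) < (n:ℝ) := by exact_mod_cast hn
    have ha := aSeq_pos hp0 n
    have hge := aSeq_ge hp0 hp1 n hn
    have h1p : (0:ℝ) < (n:ℝ)^(1-p) := Real.rpow_pos_of_pos hn0 _
    have hq : (0:ℝ) < (n:ℝ)^(1-2*p) := Real.rpow_pos_of_pos hn0 _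
    have hmulkey : (n:ℝ)^(1-2*p) ≤ (1+p) * aSeq p n * (n:ℝ)^(1-p) := by
      have h5 : (n:ℝ)^(-p) * (n:ℝ)^(1-p) = (n:ℝ)^(1-2*p) := by
        rw [← Real.rpow_add hn0]; ring_nf
      have h6 := mul_le_mul_of_nonneg_right hge h1p.le
      rw [div_mul_eq_mul_div, h5] at h6
      rw [div_le_iff₀ (by linarith : (0:ℝ) < 1+p)] at h6
      calc (n:ℝ)^(1-2*p) ≤ aSeq p n * (n:ℝ)^(1-p) * (1+p) := h6
        _ = (1+p) * aSeq p n * (n:ℝ)^(1-p) := by ring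
    rw [abs_div, abs_div, abs_of_nonneg h1p.le, abs_of_nonneg hq.le, abs_mul,
      abs_of_nonneg ha.le, mul_div_assoc']
    rw [div_le_div_iff₀ h1p hq]
    calc |Shat hatX n ω| * (n:ℝ)^(1-2*p)
        ≤ |Shat hatX n ω| * ((1+p) * aSeq p n * (n:ℝ)^(1-p)) :=
          mul_le_mul_of_nonneg_left hmulkey (abs_nonneg _)
      _ = (1+p) * (aSeq p n * |Shat hatX n ω|) * (n:ℝ)^(1-p) := by ring
  have hlow : ∀ᶠ n : ℕ in atTop,
      -((1+p) * |(aSeq p n * Shat hatX n ω)/(n:ℝ)^(1-2*p)|)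
        ≤ Shat hatX n ω / (n:ℝ)^(1-p) :=
    hbound.mono fun n hn => (abs_le.mp hn).1
  have hup : ∀ᶠ n : ℕ in atTop, Shat hatX n ω / (n:ℝ)^(1-p)
      ≤ (1+p) * |(aSeq p n * Shat hatX n ω)/(n:ℝ)^(1-2*p)| :=
    hbound.mono fun n hn => (abs_le.mp hn).2
  exact tendsto_of_tendsto_of_tendsto_of_le_of_le' (by simpa using hg.neg) hg hlow hup
end

section
/- Suppose $X \in L^2$ is centred with variance $\sigma^2$, and $p = 1/2$. Then there is a numerical constant $c$ such that for all $n \geq 2$, $\mathbb{E}\left(\sup_{k \leq n} |\hat{S}_k|^2\right) \leq c\, \sigma^2\, n \log n$. -/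
open MeasureTheory ProbabilityTheory Filter Finset

def runMax (b : ℕ → ℝ) : ℕ → ℝ
  | 0 => b 0
  | n + 1 => max (runMax b n) (b (n + 1))

lemma le_runMax (b : ℕ → ℝ) {j m : ℕ} (h : j ≤ m) : b j ≤ runMax b m := by
  induction m with
  | zero => simp_all [runMax]
  | succ m ih =>
    rcases Nat.lt_or_ge j (m+1) with h' | h'
    · exact le_trans (ih (by omega)) (le_max_left _ _)
    · have : j = m + 1 := by omega
      subst this; exact le_max_right _ _

lemma runMax_nonneg {b : ℕ → ℝ} (hb : ∀ k, 0 ≤ b k) (m : ℕ) : 0 ≤ runMax b m :=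
  le_trans (hb 0) (le_runMax b (Nat.zero_le m))

lemma pathwise_doob (b : ℕ → ℝ) (n : ℕ) :
    (runMax b n) ^ 2 + (2 * b n - runMax b n) ^ 2
      ≤ 4 * (b n) ^ 2 - 4 * ∑ k ∈ Finset.range n, runMax b k * (b (k + 1) - b k) := by
  induction n with
  | zero => simp [runMax]; nlinarith [sq_nonneg (b 0)]
  | succ n ih =>
    rw [Finset.sum_range_succ]
    rcases max_cases (runMax b n) (b (n + 1)) with ⟨hmax, hle⟩ | ⟨hmax, hle⟩ <;>
      simp only [runMax, hmax] <;> nlinarith [ih]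

lemma MeasureTheory.MemLp.integrable_mul' {Ω : Type*} {m : MeasurableSpace Ω} {μ : Measure Ω} {f g : Ω → ℝ}
    (hf : MemLp f 2 μ) (hg : MemLp g 2 μ) : Integrable (fun ω => f ω * g ω) μ := by
  have h1 : Integrable (fun ω => (f ω + g ω) ^ 2) μ := by
    simpa using (hf.add hg).integrable_sq
  have h2 := hf.integrable_sq
  have h3 := hg.integrable_sq
  have : Integrable (fun ω => (((f ω + g ω) ^ 2 - f ω ^ 2) - g ω ^ 2) / 2) μ :=
    ((h1.sub h2).sub h3).div_const 2
  exact this.congr (Filter.Eventually.of_forall fun ω => by ring)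

lemma sm_abs' {Ω : Type*} {m : MeasurableSpace Ω} {f : Ω → ℝ}
    (hf : StronglyMeasurable f) : StronglyMeasurable (fun ω => |f ω|) :=
  continuous_abs.comp_stronglyMeasurable hf

lemma sm_max' {Ω : Type*} {m : MeasurableSpace Ω} {f g : Ω → ℝ}
    (hf : StronglyMeasurable f) (hg : StronglyMeasurable g) :
    StronglyMeasurable (fun ω => max (f ω) (g ω)) := hf.sup hg

set_option maxHeartbeats 2000000 in
/-- maximal inequality in the critical regime `p = 1/2`:
`E(sup_{k ≤ n} |Ŝₖ|²) ≤ c σ² n log n` for a numerical constant `c`. -/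
theorem reinforced_maximal_inequality_critical
    {Ω : Type*} {mΩ : MeasurableSpace Ω} (P : Measure Ω) [IsProbabilityMeasure P]
    (ℱ : Filtration ℕ mΩ)
    (σ : ℝ) (p : ℝ) (hp : p = 1 / 2)
    (hatX : ℕ → Ω → ℝ)
    (hL2 : ∀ n, MemLp (hatX n) 2 P)
    (hadapt : StronglyAdapted ℱ hatX)
    (hcent : ∫ ω, hatX 1 ω ∂P = 0)
    (hvar1 : ∫ ω, (hatX 1 ω) ^ 2 ∂P = σ ^ 2)
    (hcond : ∀ n : ℕ, 1 ≤ n →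
      P[hatX (n + 1) | ℱ n]
        =ᵐ[P] fun ω => (p / n) * ∑ j ∈ Finset.Icc 1 n, hatX j ω)
    (hcond2 : ∀ n : ℕ, 1 ≤ n →
      P[fun ω => (hatX (n + 1) ω) ^ 2 | ℱ n]
        =ᵐ[P] fun ω => p * (∑ j ∈ Finset.Icc 1 n, (hatX j ω) ^ 2) / n + (1 - p) * σ ^ 2) :
    ∃ c : ℝ, 0 < c ∧ ∀ n : ℕ, 2 ≤ n →
      ∫ ω, (⨆ k ∈ Finset.Icc 1 n, (∑ j ∈ Finset.Icc 1 k, hatX j ω) ^ 2) ∂P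
        ≤ c * σ ^ 2 * n * Real.log n := by
  subst hp
  -- partial sums
  set S : ℕ → Ω → ℝ := fun k ω => ∑ j ∈ Finset.Icc 1 k, hatX j ω with hS
  have hXint : ∀ k, Integrable (hatX k) P := fun k => (hL2 k).integrable one_le_two
  have hSL2 : ∀ k, MemLp (S k) 2 P := fun k =>
    memLp_finset_sum _ (fun j _ => hL2 j)
  have hSint : ∀ k, Integrable (S k) P := fun k => (hSL2 k).integrable one_le_two
  have hSmeas : ∀ k, StronglyMeasurable[ℱ k] (S k) := by
    intro k
    apply Finset.stronglyMeasurable_fun_sum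
    intro j hj
    exact (hadapt j).mono (ℱ.mono (Finset.mem_Icc.mp hj).2)
  -- the normalizing sequence
  set a : ℕ → ℝ := fun n => ∏ j ∈ Finset.Icc 1 (n - 1), (2 * (j:ℝ)) / (2 * j + 1) with ha
  have ha_pos : ∀ n, 0 < a n := by
    intro n
    apply Finset.prod_pos
    intro j hj
    have : 1 ≤ j := (Finset.mem_Icc.mp hj).1
    positivity
  have ha_rec : ∀ n : ℕ, 1 ≤ n → a (n + 1) = a n * (2 * n / (2 * n + 1)) := by
    intro n hn
    have : (n + 1 : ℕ) - 1 = (n - 1) + 1 := by omega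
    rw [ha]
    simp only [this]
    rw [Finset.prod_Icc_succ_top (by omega : 1 ≤ (n-1) + 1)]
    have h1 : ((n : ℕ) - 1 + 1 : ℕ) = n := by omega
    rw [h1]
  have ha_anti : ∀ k n : ℕ, k ≤ n → a n ≤ a k := by
    have hstep : ∀ n : ℕ, a (n + 1) ≤ a n := by
      intro n
      rcases Nat.eq_zero_or_pos n with rfl | hn
      · simp [ha]
      · rw [ha_rec n hn]
        have h1 : (2 * (n:ℝ)) / (2 * n + 1) ≤ 1 := by
          rw [div_le_one (by positivity)]; linarith
        nlinarith [ha_pos n]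
    intro k n hkn
    exact antitone_nat_of_succ_le hstep hkn
  -- martingale: M k = a k * S k
  set M : ℕ → Ω → ℝ := fun k ω => a k * S k ω with hM
  have hML2 : ∀ k, MemLp (M k) 2 P := fun k => (hSL2 k).const_mul (a k)
  have hMint : ∀ k, Integrable (M k) P := fun k => (hML2 k).integrable one_le_two
  -- one-step conditional expectations
  have hcondS : ∀ n : ℕ, 1 ≤ n →
      P[S (n + 1) | ℱ n] =ᵐ[P] fun ω => (1 + 1 / (2 * n)) * S n ω := by
    intro n hn
    have hsplit : S (n + 1) = fun ω => S n ω + hatX (n + 1) ω := by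
      funext ω
      exact Finset.sum_Icc_succ_top (by omega) _
    have h1 : P[S (n + 1) | ℱ n] =ᵐ[P] P[S n | ℱ n] + P[hatX (n + 1) | ℱ n] := by
      rw [hsplit]
      exact condExp_add (hSint n) (hXint (n + 1)) _
    have h2 : P[S n | ℱ n] = S n :=
      condExp_of_stronglyMeasurable (ℱ.le n) (hSmeas n) (hSint n)
    have hn' : (n : ℝ) ≠ 0 := Nat.cast_ne_zero.mpr (by omega)
    filter_upwards [h1, hcond n hn] with ω hω hω2
    rw [hω]
    simp only [Pi.add_apply, h2, hω2]
    show S n ω + 1 / 2 / (n:ℝ) * S n ω = _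
    field_simp
  have hcondM : ∀ n : ℕ, 1 ≤ n → P[M (n + 1) | ℱ n] =ᵐ[P] M n := by
    intro n hn
    have h1 : P[M (n + 1) | ℱ n] =ᵐ[P] a (n + 1) • P[S (n + 1) | ℱ n] := by
      have := condExp_smul (m := ℱ n) (μ := P) (a (n + 1)) (S (n + 1))
      exact this
    have hn' : (n : ℝ) ≠ 0 := Nat.cast_ne_zero.mpr (by omega)
    filter_upwards [h1, hcondS n hn] with ω hω hω2
    rw [hM]
    show (P[M (n + 1) | ℱ n]) ω = a n * S n ω
    rw [hω, Pi.smul_apply, smul_eq_mul, hω2, ha_rec n hn]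
    have h2n : (2 * (n:ℝ) + 1) ≠ 0 := by positivity
    field_simp
  -- second moments
  have hv : ∀ n : ℕ, 1 ≤ n → ∫ ω, (hatX n ω) ^ 2 ∂P = σ ^ 2 := by
    intro n
    induction n using Nat.strong_induction_on with
    | _ n ih =>
      intro hn
      match n, hn with
      | 1, _ => exact hvar1
      | (m + 2), _ =>
        have hm : 1 ≤ m + 1 := by omega
        have h1 : ∫ ω, (hatX (m + 2) ω) ^ 2 ∂P
            = ∫ ω, (P[fun ω => (hatX (m + 1 + 1) ω) ^ 2 | ℱ (m + 1)]) ω ∂P :=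
          (integral_condExp (ℱ.le (m + 1))).symm
        rw [h1, integral_congr_ae (hcond2 (m + 1) hm)]
        have hint : ∀ j, Integrable (fun ω => (hatX j ω) ^ 2) P := fun j =>
          (hL2 j).integrable_sq
        have hintsum : Integrable (fun ω => ∑ j ∈ Finset.Icc 1 (m + 1), (hatX j ω) ^ 2) P :=
          integrable_finset_sum _ (fun j _ => hint j)
        have hsplit : (fun ω => (1:ℝ) / 2 * (∑ j ∈ Finset.Icc 1 (m + 1), (hatX j ω) ^ 2)
              / (m + 1 : ℕ) + (1 - 1 / 2) * σ ^ 2)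
            = fun ω => (1 / 2 / ((m:ℝ) + 1)) * (∑ j ∈ Finset.Icc 1 (m + 1), (hatX j ω) ^ 2)
              + (1 - 1 / 2) * σ ^ 2 := by
          funext ω
          push_cast
          ring
        rw [hsplit, integral_add (hintsum.const_mul _) (integrable_const _),
          integral_const_mul, integral_finset_sum _ (fun j _ => hint j)]
        have hsum : ∑ j ∈ Finset.Icc 1 (m + 1), ∫ ω, (hatX j ω) ^ 2 ∂P
            = (m + 1 : ℝ) * σ ^ 2 := by
          rw [Finset.sum_congr rfl (fun j hj => ih j (by
            have := (Finset.mem_Icc.mp hj).2; omega) (Finset.mem_Icc.mp hj).1)]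
          simp [Nat.card_Icc]
        rw [hsum]
        simp only [measure_univ, probReal_univ, ENNReal.toReal_one, smul_eq_mul, one_mul, integral_const]
        have : ((m:ℝ) + 1) ≠ 0 := by positivity
        field_simp
        ring
  set H : ℕ → ℝ := fun n => ∑ j ∈ Finset.Icc 1 n, (1 / (j:ℝ)) with hH
  have hcross : ∀ n : ℕ, 1 ≤ n →
      ∫ ω, S n ω * hatX (n + 1) ω ∂P = 1 / 2 / n * ∫ ω, (S n ω) ^ 2 ∂P := by
    intro n hn
    have hprod : Integrable (fun ω => S n ω * hatX (n + 1) ω) P :=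
      (hSL2 n).integrable_mul' (hL2 (n + 1))
    have h1 : ∫ ω, S n ω * hatX (n + 1) ω ∂P
        = ∫ ω, (P[fun ω => S n ω * hatX (n + 1) ω | ℱ n]) ω ∂P :=
      (integral_condExp (ℱ.le n)).symm
    have h2 : P[fun ω => S n ω * hatX (n + 1) ω | ℱ n]
        =ᵐ[P] fun ω => S n ω * (P[hatX (n + 1) | ℱ n]) ω := by
      have := condExp_mul_of_stronglyMeasurable_left (μ := P) (hSmeas n) hprod (hXint (n + 1))
      exact this
    have h3 : (fun ω => S n ω * (P[hatX (n + 1) | ℱ n]) ω)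
        =ᵐ[P] fun ω => 1 / 2 / (n:ℝ) * (S n ω) ^ 2 := by
      filter_upwards [hcond n hn] with ω hω
      rw [hω]
      show S n ω * (1 / 2 / (n:ℝ) * S n ω) = _
      ring
    rw [h1, integral_congr_ae (h2.trans h3), integral_const_mul]
  have hu : ∀ n : ℕ, 1 ≤ n → ∫ ω, (S n ω) ^ 2 ∂P = σ ^ 2 * n * H n := by
    intro n hn
    induction n, hn using Nat.le_induction with
    | base =>
      have h1 : S 1 = hatX 1 := by
        funext ω
        simp [hS]
      rw [h1, hvar1, hH]
      norm_num
    | succ n hn ih =>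
      have hn' : ((n:ℝ)) ≠ 0 := Nat.cast_ne_zero.mpr (by omega)
      have hsplit : ∀ ω, S (n + 1) ω = S n ω + hatX (n + 1) ω := fun ω =>
        Finset.sum_Icc_succ_top (by omega) _
      have hexp : (fun ω => (S (n + 1) ω) ^ 2)
          = fun ω => (S n ω) ^ 2 + 2 * (S n ω * hatX (n + 1) ω) + (hatX (n + 1) ω) ^ 2 := by
        funext ω
        rw [hsplit ω]
        ring
      have hI1 : Integrable (fun ω => (S n ω) ^ 2) P := (hSL2 n).integrable_sq
      have hI2 : Integrable (fun ω => 2 * (S n ω * hatX (n + 1) ω)) P :=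
        ((hSL2 n).integrable_mul' (hL2 (n + 1))).const_mul 2
      have hI3 : Integrable (fun ω => (hatX (n + 1) ω) ^ 2) P := (hL2 (n + 1)).integrable_sq
      have hI12 : Integrable (fun ω => (S n ω) ^ 2 + 2 * (S n ω * hatX (n + 1) ω)) P :=
        hI1.add hI2
      rw [hexp, integral_add hI12 hI3, integral_add hI1 hI2, integral_const_mul,
        hcross n hn, ih, hv (n + 1) (by omega)]
      have hHsucc : H (n + 1) = H n + 1 / ((n:ℝ) + 1) := by
        rw [hH]
        have := Finset.sum_Icc_succ_top (a := 1) (b := n) (by omega) (fun j => 1 / (j:ℝ))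
        push_cast at this ⊢
        rw [this]
      rw [hHsucc]
      push_cast
      field_simp
  -- Doob part
  set b : ℕ → Ω → ℝ := fun k ω => |M (k + 1) ω| with hb
  set B : ℕ → Ω → ℝ := fun k ω => runMax (fun j => b j ω) k with hB
  have hbL2 : ∀ k, MemLp (b k) 2 P := fun k => (hML2 (k + 1)).abs
  have hbint : ∀ k, Integrable (b k) P := fun k => (hbL2 k).integrable one_le_two
  have hbmeas : ∀ k, StronglyMeasurable[ℱ (k + 1)] (b k) := by
    intro k
    have h1 : StronglyMeasurable[ℱ (k + 1)] (M (k + 1)) :=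
      (hSmeas (k + 1)).const_mul (a (k + 1))
    exact sm_abs' h1
  have hBL2 : ∀ k, MemLp (B k) 2 P := by
    intro k
    induction k with
    | zero => exact hbL2 0
    | succ k ih => exact ih.sup (hbL2 (k + 1))
  have hBint : ∀ k, Integrable (B k) P := fun k => (hBL2 k).integrable one_le_two
  have hBmeas : ∀ k, StronglyMeasurable[ℱ (k + 1)] (B k) := by
    intro k
    induction k with
    | zero => exact hbmeas 0
    | succ k ih =>
      have h1 : StronglyMeasurable[ℱ (k + 1 + 1)] (B k) := ih.mono (ℱ.mono (by omega))
      exact sm_max' h1 (hbmeas (k + 1))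
  have hBnonneg : ∀ k ω, 0 ≤ B k ω := fun k ω =>
    runMax_nonneg (fun j => abs_nonneg _) k
  have hsubmart : ∀ k : ℕ, b k ≤ᵐ[P] P[b (k + 1) | ℱ (k + 1)] := by
    intro k
    have h1 := hcondM (k + 1) (by omega)
    have h2 : P[M (k + 2) | ℱ (k + 1)] ≤ᵐ[P] P[b (k + 1) | ℱ (k + 1)] :=
      condExp_mono (hMint (k + 2)) (hbint (k + 1))
        (Filter.Eventually.of_forall fun ω => le_abs_self _)
    have h3 : P[-M (k + 2) | ℱ (k + 1)] ≤ᵐ[P] P[b (k + 1) | ℱ (k + 1)] :=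
      condExp_mono (hMint (k + 2)).neg (hbint (k + 1))
        (Filter.Eventually.of_forall fun ω => by
          show -M (k + 2) ω ≤ |M (k + 2) ω|
          calc -M (k + 2) ω ≤ |(-M (k + 2) ω)| := le_abs_self _
            _ = |M (k + 2) ω| := abs_neg _)
    have h4 := condExp_neg (μ := P) (m := ℱ (k + 1)) (M (k + 2))
    filter_upwards [h1, h2, h3, h4] with ω e1 e2 e3 e4
    show |M (k + 1) ω| ≤ _
    rw [← e1]
    refine abs_le.mpr ⟨?_, e2⟩
    have : -(P[M (k + 2) | ℱ (k + 1)]) ω ≤ (P[b (k + 1) | ℱ (k + 1)]) ω := by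
      have := e4 ▸ e3
      calc -(P[M (k + 2) | ℱ (k + 1)]) ω = (P[-M (k + 2) | ℱ (k + 1)]) ω := by
            rw [e4]; rfl
        _ ≤ _ := e3
    linarith
  have hstep : ∀ k : ℕ, ∫ ω, B k ω * b k ω ∂P ≤ ∫ ω, B k ω * b (k + 1) ω ∂P := by
    intro k
    have hprod : Integrable (fun ω => B k ω * b (k + 1) ω) P :=
      (hBL2 k).integrable_mul' (hbL2 (k + 1))
    have e2 : P[fun ω => B k ω * b (k + 1) ω | ℱ (k + 1)]
        =ᵐ[P] fun ω => B k ω * (P[b (k + 1) | ℱ (k + 1)]) ω := by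
      have := condExp_mul_of_stronglyMeasurable_left (μ := P) (hBmeas k) hprod (hbint (k + 1))
      exact this
    have hI : Integrable (fun ω => B k ω * (P[b (k + 1) | ℱ (k + 1)]) ω) P :=
      integrable_condExp.congr e2
    calc ∫ ω, B k ω * b k ω ∂P
        ≤ ∫ ω, B k ω * (P[b (k + 1) | ℱ (k + 1)]) ω ∂P := by
          refine integral_mono_ae ((hBL2 k).integrable_mul' (hbL2 k)) hI ?_
          filter_upwards [hsubmart k] with ω hω
          exact mul_le_mul_of_nonneg_left hω (hBnonneg k ω)
      _ = ∫ ω, (P[fun ω => B k ω * b (k + 1) ω | ℱ (k + 1)]) ω ∂P :=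
          (integral_congr_ae e2).symm
      _ = ∫ ω, B k ω * b (k + 1) ω ∂P := integral_condExp (ℱ.le (k + 1))
  have hdoob : ∀ m : ℕ, ∫ ω, (B m ω) ^ 2 ∂P ≤ 4 * ∫ ω, (M (m + 1) ω) ^ 2 ∂P := by
    intro m
    have hkey : ∀ ω, (B m ω) ^ 2
        ≤ 4 * (b m ω) ^ 2 - 4 * ∑ k ∈ Finset.range m, B k ω * (b (k + 1) ω - b k ω) := by
      intro ω
      have := pathwise_doob (fun j => b j ω) m
      have h0 : (0:ℝ) ≤ (2 * b m ω - runMax (fun j => b j ω) m) ^ 2 := sq_nonneg _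
      rw [hB]
      linarith [this]
    have hIsum : Integrable (fun ω => ∑ k ∈ Finset.range m, B k ω * (b (k + 1) ω - b k ω)) P := by
      apply integrable_finset_sum
      intro k _
      have h1 : Integrable (fun ω => B k ω * b (k + 1) ω) P :=
        (hBL2 k).integrable_mul' (hbL2 (k + 1))
      have h2 : Integrable (fun ω => B k ω * b k ω) P :=
        (hBL2 k).integrable_mul' (hbL2 k)
      exact (h1.sub h2).congr (Filter.Eventually.of_forall fun ω => by simp only [Pi.sub_apply]; ring)
    have hRHSint : Integrable (fun ω => 4 * (b m ω) ^ 2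
        - 4 * ∑ k ∈ Finset.range m, B k ω * (b (k + 1) ω - b k ω)) P :=
      ((hbL2 m).integrable_sq.const_mul 4).sub (hIsum.const_mul 4)
    have h1 : ∫ ω, (B m ω) ^ 2 ∂P ≤ ∫ ω, (4 * (b m ω) ^ 2
        - 4 * ∑ k ∈ Finset.range m, B k ω * (b (k + 1) ω - b k ω)) ∂P :=
      integral_mono_ae (hBL2 m).integrable_sq hRHSint (Filter.Eventually.of_forall hkey)
    have h2 : ∫ ω, (4 * (b m ω) ^ 2
          - 4 * ∑ k ∈ Finset.range m, B k ω * (b (k + 1) ω - b k ω)) ∂P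
        = 4 * ∫ ω, (b m ω) ^ 2 ∂P
          - 4 * ∑ k ∈ Finset.range m, ∫ ω, B k ω * (b (k + 1) ω - b k ω) ∂P := by
      rw [integral_sub ((hbL2 m).integrable_sq.const_mul 4) (hIsum.const_mul 4),
        integral_const_mul, integral_const_mul,
        integral_finset_sum _ (fun k _ => by
          have h1 : Integrable (fun ω => B k ω * b (k + 1) ω) P :=
            (hBL2 k).integrable_mul' (hbL2 (k + 1))
          have h2 : Integrable (fun ω => B k ω * b k ω) P :=
            (hBL2 k).integrable_mul' (hbL2 k)
          exact (h1.sub h2).congr (Filter.Eventually.of_forall fun ω => by simp only [Pi.sub_apply]; ring))]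
    have h3 : ∀ k ∈ Finset.range m, (0:ℝ) ≤ ∫ ω, B k ω * (b (k + 1) ω - b k ω) ∂P := by
      intro k _
      have h1 : Integrable (fun ω => B k ω * b (k + 1) ω) P :=
        (hBL2 k).integrable_mul' (hbL2 (k + 1))
      have h2 : Integrable (fun ω => B k ω * b k ω) P :=
        (hBL2 k).integrable_mul' (hbL2 k)
      have heq : ∫ ω, B k ω * (b (k + 1) ω - b k ω) ∂P
          = ∫ ω, B k ω * b (k + 1) ω ∂P - ∫ ω, B k ω * b k ω ∂P := by
        rw [← integral_sub h1 h2]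
        exact integral_congr_ae (Filter.Eventually.of_forall fun ω => by ring)
      rw [heq]
      linarith [hstep k]
    have hbsq : ∫ ω, (b m ω) ^ 2 ∂P = ∫ ω, (M (m + 1) ω) ^ 2 ∂P := by
      refine integral_congr_ae (Filter.Eventually.of_forall fun ω => ?_)
      show |M (m + 1) ω| ^ 2 = _
      rw [sq_abs]
    have hsumnn : (0:ℝ) ≤ ∑ k ∈ Finset.range m, ∫ ω, B k ω * (b (k + 1) ω - b k ω) ∂P :=
      Finset.sum_nonneg h3
    calc ∫ ω, (B m ω) ^ 2 ∂P ≤ _ := h1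
      _ = _ := h2
      _ ≤ 4 * ∫ ω, (b m ω) ^ 2 ∂P := by linarith
      _ = 4 * ∫ ω, (M (m + 1) ω) ^ 2 ∂P := by rw [hbsq]
  -- conclusion
  refine ⟨12, by norm_num, fun n hn => ?_⟩
  have hn1 : 1 ≤ n := by omega
  set m := n - 1 with hm
  have hmn : m + 1 = n := by omega
  have hσ2 : (0:ℝ) ≤ σ ^ 2 := sq_nonneg σ
  have han := ha_pos n
  -- pointwise bound
  have hptR : ∀ ω, (0:ℝ) ≤ 1 / (a n) ^ 2 * (B m ω) ^ 2 := fun ω => by positivity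
  have hptwise : ∀ ω, (⨆ k ∈ Finset.Icc 1 n, (∑ j ∈ Finset.Icc 1 k, hatX j ω) ^ 2)
      ≤ 1 / (a n) ^ 2 * (B m ω) ^ 2 := by
    intro ω
    refine Real.iSup_le (fun k => Real.iSup_le (fun hk => ?_) (hptR ω)) (hptR ω)
    obtain ⟨hk1, hk2⟩ := Finset.mem_Icc.mp hk
    have hak := ha_pos k
    have hSk : (∑ j ∈ Finset.Icc 1 k, hatX j ω) = S k ω := rfl
    have hMk : M k ω = a k * S k ω := rfl
    have habs : |M k ω| ≤ B m ω := by
      have h1 : |M ((k - 1) + 1) ω| ≤ B m ω :=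
        le_runMax (fun j => b j ω) (by omega : k - 1 ≤ m)
      have h2 : (k - 1) + 1 = k := by omega
      rwa [h2] at h1
    have hsq : (M k ω) ^ 2 ≤ (B m ω) ^ 2 := by
      rw [← sq_abs (M k ω)]
      exact pow_le_pow_left₀ (abs_nonneg _) habs 2
    have hinv : 1 / (a k) ^ 2 ≤ 1 / (a n) ^ 2 := by
      apply one_div_le_one_div_of_le (by positivity)
      have := ha_anti k n hk2
      nlinarith
    have hSkM : (S k ω) ^ 2 = 1 / (a k) ^ 2 * (M k ω) ^ 2 := by
      rw [hMk]
      field_simp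
    rw [hSk, hSkM]
    calc 1 / (a k) ^ 2 * (M k ω) ^ 2 ≤ 1 / (a k) ^ 2 * (B m ω) ^ 2 :=
          mul_le_mul_of_nonneg_left hsq (by positivity)
      _ ≤ 1 / (a n) ^ 2 * (B m ω) ^ 2 :=
          mul_le_mul_of_nonneg_right hinv (sq_nonneg _)
  have hIR : Integrable (fun ω => 1 / (a n) ^ 2 * (B m ω) ^ 2) P :=
    ((hBL2 m).integrable_sq).const_mul _
  have hint1 : ∫ ω, (⨆ k ∈ Finset.Icc 1 n, (∑ j ∈ Finset.Icc 1 k, hatX j ω) ^ 2) ∂P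
      ≤ ∫ ω, 1 / (a n) ^ 2 * (B m ω) ^ 2 ∂P := by
    refine integral_mono_of_nonneg ?_ hIR (Filter.Eventually.of_forall hptwise)
    refine Filter.Eventually.of_forall fun ω => ?_
    exact Real.iSup_nonneg fun k => Real.iSup_nonneg fun _ => sq_nonneg _
  have hint2 : ∫ ω, 1 / (a n) ^ 2 * (B m ω) ^ 2 ∂P
      ≤ 1 / (a n) ^ 2 * (4 * ∫ ω, (M n ω) ^ 2 ∂P) := by
    rw [integral_const_mul]
    have := hdoob m
    rw [hmn] at this
    have h0 : (0:ℝ) ≤ 1 / (a n) ^ 2 := by positivity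
    exact mul_le_mul_of_nonneg_left this h0
  have hMsq : ∫ ω, (M n ω) ^ 2 ∂P = (a n) ^ 2 * ∫ ω, (S n ω) ^ 2 ∂P := by
    rw [← integral_const_mul]
    refine integral_congr_ae (Filter.Eventually.of_forall fun ω => ?_)
    show (a n * S n ω) ^ 2 = _
    ring
  have hfinal1 : ∫ ω, (⨆ k ∈ Finset.Icc 1 n, (∑ j ∈ Finset.Icc 1 k, hatX j ω) ^ 2) ∂P
      ≤ 4 * (σ ^ 2 * n * H n) := by
    have h1 : 1 / (a n) ^ 2 * (4 * ∫ ω, (M n ω) ^ 2 ∂P) = 4 * ∫ ω, (S n ω) ^ 2 ∂P := by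
      rw [hMsq]
      field_simp
    calc _ ≤ _ := hint1
      _ ≤ _ := hint2
      _ = 4 * ∫ ω, (S n ω) ^ 2 ∂P := h1
      _ = 4 * (σ ^ 2 * n * H n) := by rw [hu n hn1]
  -- harmonic bound
  have hlog2 : (1:ℝ) / 2 < Real.log 2 := by
    have := Real.log_two_gt_d9
    linarith
  have hlogn : Real.log 2 ≤ Real.log n := by
    apply Real.log_le_log (by norm_num)
    exact_mod_cast hn
  have hHle : H n ≤ 3 * Real.log n := by
    have h1 : H n = (harmonic n : ℝ) := by
      rw [hH, harmonic_eq_sum_Icc]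
      push_cast
      ring
    have h2 := harmonic_le_one_add_log n
    have h3 : (1:ℝ) ≤ 2 * Real.log n := by linarith
    rw [h1]
    calc (harmonic n : ℝ) ≤ 1 + Real.log n := h2
      _ ≤ 3 * Real.log n := by linarith
  calc ∫ ω, (⨆ k ∈ Finset.Icc 1 n, (∑ j ∈ Finset.Icc 1 k, hatX j ω) ^ 2) ∂P
      ≤ 4 * (σ ^ 2 * n * H n) := hfinal1
    _ ≤ 4 * (σ ^ 2 * n * (3 * Real.log n)) := by
        have hn0 : (0:ℝ) ≤ (n:ℝ) := Nat.cast_nonneg n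
        have : (0:ℝ) ≤ σ ^ 2 * n := by positivity
        nlinarith [hHle]
    _ = 12 * σ ^ 2 * n * Real.log n := by ring
end

section
/- Suppose $X \in L^2$ is centred with variance $\sigma^2$, and $p \in (1/2, 1)$. Then there is a numerical constant $c$ such that for all $n \geq 1$, $\mathbb{E}\left(\sup_{k \leq n} |\hat{S}_k|^2\right) \leq c\, \sigma^2\, n^{2p}$. -/
open MeasureTheory ProbabilityTheory Filter Finset

section helpers

variable {Ω : Type*} {m0 : MeasurableSpace Ω} {μ : Measure Ω}

lemma integrable_mul_of_memL2 {f g : Ω → ℝ} (hf : MemLp f 2 μ) (hg : MemLp g 2 μ) :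
    Integrable (fun ω => f ω * g ω) μ := by
  refine Integrable.mono' (hf.integrable_sq.add hg.integrable_sq)
    (hf.aestronglyMeasurable.mul hg.aestronglyMeasurable) (.of_forall fun ω => ?_)
  have := abs_mul (f ω) (g ω)
  simp only [Pi.add_apply]
  rw [Real.norm_eq_abs, this]
  nlinarith [sq_nonneg (|f ω| - |g ω|), sq_abs (f ω), sq_abs (g ω), abs_nonneg (f ω),
    abs_nonneg (g ω)]

lemma abs_condExp_le_condExp_abs {m : MeasurableSpace Ω} (hm : m ≤ m0)
    [SigmaFinite (μ.trim hm)] {f : Ω → ℝ} (hf : Integrable f μ) :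
    ∀ᵐ ω ∂μ, |(μ[f|m]) ω| ≤ (μ[(fun ω => |f ω|)|m]) ω := by
  have habs : Integrable (fun ω => |f ω|) μ := hf.abs
  filter_upwards [condExp_mono hf habs (.of_forall fun ω => le_abs_self (f ω)),
    EventuallyLE.trans (condExp_neg f m).symm.le
      (condExp_mono hf.neg habs (.of_forall fun ω => neg_le_abs (f ω)))] with ω h1 h2
  have h2' : -((μ[f|m]) ω) ≤ (μ[(fun ω => |f ω|)|m]) ω := by simpa using h2
  exact abs_le.2 ⟨by linarith, h1⟩

lemma doob_L2 [IsProbabilityMeasure μ] (𝒢 : Filtration ℕ m0) {f : ℕ → Ω → ℝ}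
    (hsub : Submartingale f 𝒢 μ) (hnn : ∀ k ω, 0 ≤ f k ω)
    (hL2 : ∀ k, MemLp (f k) 2 μ) (n : ℕ) :
    ∫ ω, ((range (n+1)).sup' nonempty_range_add_one (fun k => f k ω))^2 ∂μ
      ≤ 4 * ∫ ω, (f n ω)^2 ∂μ := by
  set H : ℕ → Ω → ℝ := fun k ω => (range (k+1)).sup' nonempty_range_add_one (fun i => f i ω)
    with hHdef
  have hH0 : ∀ ω, H 0 ω = f 0 ω := fun ω => by simp [hHdef]
  have hfleH' : ∀ k i, i < k + 1 → ∀ ω, f i ω ≤ H k ω := fun k i hi ω =>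
    le_sup' (f := fun i => f i ω) (mem_range.2 hi)
  have hfleH : ∀ k ω, f k ω ≤ H k ω := fun k ω => hfleH' k k (Nat.lt_succ_self k) ω
  have hHsucc : ∀ k ω, H (k+1) ω = max (H k ω) (f (k+1) ω) := by
    intro k ω
    refine le_antisymm (sup'_le _ _ fun i hi => ?_) (max_le (sup'_le _ _ fun i hi => ?_)
      (hfleH (k+1) ω))
    · rcases Nat.lt_succ_iff_lt_or_eq.1 (mem_range.1 hi) with h | h
      · exact le_trans (hfleH' k i h ω) (le_max_left _ _)
      · exact h ▸ le_max_right _ _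
    · exact hfleH' (k+1) i (Nat.lt_succ_of_lt (mem_range.1 hi)) ω
  have hHnn : ∀ k ω, 0 ≤ H k ω := fun k ω => (hnn k ω).trans (hfleH k ω)
  have hHmono : ∀ k ω, H k ω ≤ H (k+1) ω := fun k ω => by
    rw [hHsucc]; exact le_max_left _ _
  have hHsm : ∀ k, StronglyMeasurable[𝒢 k] (H k) := by
    intro k
    induction k with
    | zero => exact (funext hH0 : H 0 = f 0) ▸ hsub.stronglyMeasurable 0
    | succ k ih =>
      have : H (k+1) = H k ⊔ f (k+1) := funext (hHsucc k)
      rw [this]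
      exact @StronglyMeasurable.sup Ω ℝ (H k) (f (k+1)) (𝒢 (k+1)) _ _ _
        (ih.mono (𝒢.mono k.le_succ)) (hsub.stronglyMeasurable (k+1))
  have hHL2 : ∀ k, MemLp (H k) 2 μ := by
    intro k
    refine MemLp.of_le (f := H k) (g := ∑ i ∈ range (k+1), f i) (memLp_finset_sum' (range (k+1)) (fun i _ => hL2 i))
      ((hHsm k).mono (𝒢.le k)).aestronglyMeasurable (.of_forall fun ω => ?_)
    obtain ⟨i, hi, hieq⟩ := exists_mem_eq_sup' (nonempty_range_add_one (n := k))
      (fun i => f i ω)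
    have h1 : H k ω ≤ ∑ i ∈ range (k+1), f i ω := by
      rw [hHdef]; simp only; rw [hieq]
      exact single_le_sum (fun j _ => hnn j ω) hi
    have h2 : (∑ i ∈ range (k+1), f i ω) = (∑ i ∈ range (k+1), f i) ω := by
      simp [Finset.sum_apply]
    rw [Real.norm_eq_abs, Real.norm_eq_abs, abs_of_nonneg (hHnn k ω), ← h2,
      abs_of_nonneg (Finset.sum_nonneg fun j _ => hnn j ω)]
    exact h1
  -- pathwise Doob inequality
  have hpath : ∀ m ω, (H m ω)^2 ≤
      2 * (f 0 ω * H 0 ω + ∑ k ∈ range m, f (k+1) ω * (H (k+1) ω - H k ω)) := by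
    intro m ω
    induction m with
    | zero => simp [hH0 ω]; nlinarith [sq_nonneg (f 0 ω)]
    | succ m ih =>
      rw [Finset.sum_range_succ]
      have hstep : (H (m+1) ω)^2 - (H m ω)^2 ≤ 2 * (f (m+1) ω * (H (m+1) ω - H m ω)) := by
        rcases max_cases (H m ω) (f (m+1) ω) with ⟨h1, h2⟩ | ⟨h1, h2⟩ <;>
          rw [hHsucc m ω, h1]
        · simp
        · nlinarith [sq_nonneg (H m ω - f (m+1) ω)]
      linarith
  -- key step : E[f k * Δ] ≤ E[f n * Δ] for Δ nonneg 𝒢 k-measurable L2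
  have hkey : ∀ (k : ℕ), k ≤ n → ∀ (Δ : Ω → ℝ), (∀ ω, 0 ≤ Δ ω) →
      StronglyMeasurable[𝒢 k] Δ → MemLp Δ 2 μ →
      ∫ ω, f k ω * Δ ω ∂μ ≤ ∫ ω, f n ω * Δ ω ∂μ := by
    intro k hkn Δ hΔnn hΔsm hΔL2
    have h1 : Integrable (fun ω => f k ω * Δ ω) μ := integrable_mul_of_memL2 (hL2 k) hΔL2
    have h2 : Integrable (fun ω => Δ ω * f n ω) μ := integrable_mul_of_memL2 hΔL2 (hL2 n)
    have hpull : μ[Δ * f n|𝒢 k] =ᵐ[μ] Δ * μ[f n|𝒢 k] :=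
      condExp_mul_of_stronglyMeasurable_left hΔsm h2 (hsub.integrable n)
    have h3 : Integrable (Δ * μ[f n|𝒢 k]) μ := integrable_condExp.congr hpull
    calc ∫ ω, f k ω * Δ ω ∂μ ≤ ∫ ω, (Δ * μ[f n|𝒢 k]) ω ∂μ := by
          refine integral_mono_ae h1 h3 ?_
          filter_upwards [hsub.ae_le_condExp hkn] with ω hω
          simpa [mul_comm] using mul_le_mul_of_nonneg_right hω (hΔnn ω)
      _ = ∫ ω, (μ[Δ * f n|𝒢 k]) ω ∂μ := (integral_congr_ae hpull).symm
      _ = ∫ ω, (Δ * f n) ω ∂μ := integral_condExp (𝒢.le k)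
      _ = ∫ ω, f n ω * Δ ω ∂μ := by simp [mul_comm]
  -- integrabilities
  have hΔL2 : ∀ k, MemLp (fun ω => H (k+1) ω - H k ω) 2 μ := fun k => (hHL2 (k+1)).sub (hHL2 k)
  have hint1 : Integrable (fun ω => f 0 ω * H 0 ω) μ := integrable_mul_of_memL2 (hL2 0) (hHL2 0)
  have hint2 : ∀ k, Integrable (fun ω => f (k+1) ω * (H (k+1) ω - H k ω)) μ :=
    fun k => integrable_mul_of_memL2 (hL2 (k+1)) (hΔL2 k)
  have hint3 : Integrable (fun ω => f n ω * H 0 ω) μ := integrable_mul_of_memL2 (hL2 n) (hHL2 0)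
  have hint4 : ∀ k, Integrable (fun ω => f n ω * (H (k+1) ω - H k ω)) μ :=
    fun k => integrable_mul_of_memL2 (hL2 n) (hΔL2 k)
  have hintH2 : Integrable (fun ω => (H n ω)^2) μ := (hHL2 n).integrable_sq
  have hintf2 : Integrable (fun ω => (f n ω)^2) μ := (hL2 n).integrable_sq
  have step1 : ∫ ω, (H n ω)^2 ∂μ ≤
      2 * ((∫ ω, f 0 ω * H 0 ω ∂μ) +
        ∑ k ∈ range n, ∫ ω, f (k+1) ω * (H (k+1) ω - H k ω) ∂μ) := by
    have h := integral_mono hintH2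
      ((hint1.add (integrable_finset_sum _ (fun k _ => hint2 k))).const_mul 2)
      (fun ω => hpath n ω)
    simp only [Pi.add_apply] at h
    rwa [integral_const_mul, integral_add hint1 (integrable_finset_sum _ (fun k _ => hint2 k)),
      integral_finset_sum _ (fun k _ => hint2 k)] at h
  have step3 : (∫ ω, f n ω * H 0 ω ∂μ)
      + ∑ k ∈ range n, ∫ ω, f n ω * (H (k+1) ω - H k ω) ∂μ
      = ∫ ω, f n ω * H n ω ∂μ := by
    rw [← integral_finset_sum _ (fun k _ => hint4 k),
      ← integral_add hint3 (integrable_finset_sum _ (fun k _ => hint4 k))]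
    refine integral_congr_ae (.of_forall fun ω => ?_)
    simp only
    rw [← Finset.mul_sum, Finset.sum_range_sub (fun k => H k ω)]
    ring
  have step2 : (∫ ω, f 0 ω * H 0 ω ∂μ)
      + ∑ k ∈ range n, ∫ ω, f (k+1) ω * (H (k+1) ω - H k ω) ∂μ
      ≤ ∫ ω, f n ω * H n ω ∂μ := by
    rw [← step3]
    refine add_le_add (hkey 0 (Nat.zero_le n) (H 0) (hHnn 0) (hHsm 0) (hHL2 0))
      (Finset.sum_le_sum fun k hk => ?_)
    refine hkey (k+1) (Nat.succ_le_of_lt (mem_range.1 hk)) _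
      (fun ω => sub_nonneg.2 (hHmono k ω)) ?_ (hΔL2 k)
    exact (hHsm (k+1)).sub ((hHsm k).mono (𝒢.mono k.le_succ))
  have step4 : ∫ ω, f n ω * H n ω ∂μ
      ≤ (∫ ω, (f n ω)^2 ∂μ) + (1/4) * ∫ ω, (H n ω)^2 ∂μ := by
    have h := integral_mono (integrable_mul_of_memL2 (hL2 n) (hHL2 n))
      (hintf2.add (hintH2.const_mul (1/4)))
      (fun ω => by nlinarith [sq_nonneg (f n ω - H n ω / 2)] :
        (fun ω => f n ω * H n ω) ≤ fun ω => (f n ω)^2 + (1/4) * (H n ω)^2)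
    simp only [Pi.add_apply] at h
    rwa [integral_add hintf2 (hintH2.const_mul (1/4)), integral_const_mul] at h
  have : ∫ ω, (H n ω)^2 ∂μ ≤ 4 * ∫ ω, (f n ω)^2 ∂μ := by linarith
  exact this

end helpers

/-- maximal inequality in the superdiffusive regime `p ∈ (1/2,1)`:
`E(sup_{k ≤ n} |Ŝₖ|²) ≤ c σ² n^{2p}` for a numerical constant `c`. -/
theorem reinforced_maximal_inequality_superdiffusive
    {Ω : Type*} {mΩ : MeasurableSpace Ω} (P : Measure Ω) [IsProbabilityMeasure P]
    (ℱ : Filtration ℕ mΩ)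
    (p σ : ℝ) (hp : p ∈ Set.Ioo (1 / 2 : ℝ) 1)
    (hatX : ℕ → Ω → ℝ)
    (hL2 : ∀ n, MemLp (hatX n) 2 P)
    (hadapt : StronglyAdapted ℱ hatX)
    (hcent : ∫ ω, hatX 1 ω ∂P = 0)
    (hvar1 : ∫ ω, (hatX 1 ω) ^ 2 ∂P = σ ^ 2)
    (hcond : ∀ n : ℕ, 1 ≤ n →
      P[hatX (n + 1) | ℱ n]
        =ᵐ[P] fun ω => (p / n) * ∑ j ∈ Finset.Icc 1 n, hatX j ω)
    (hcond2 : ∀ n : ℕ, 1 ≤ n →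
      P[fun ω => (hatX (n + 1) ω) ^ 2 | ℱ n]
        =ᵐ[P] fun ω => p * (∑ j ∈ Finset.Icc 1 n, (hatX j ω) ^ 2) / n + (1 - p) * σ ^ 2) :
    ∃ c : ℝ, 0 < c ∧ ∀ n : ℕ, 1 ≤ n →
      ∫ ω, (⨆ k ∈ Finset.Icc 1 n, (∑ j ∈ Finset.Icc 1 k, hatX j ω) ^ 2) ∂P
        ≤ c * σ ^ 2 * (n : ℝ) ^ (2 * p) := by
  obtain ⟨hp1, hp2⟩ := hp
  have hppos : (0:ℝ) < p := lt_trans (by norm_num) hp1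
  have h2p1 : (1:ℝ) ≤ 2 * p := by linarith
  have hσ2 : (0:ℝ) ≤ σ ^ 2 := sq_nonneg σ
  set S : ℕ → Ω → ℝ := fun k ω => ∑ j ∈ Finset.Icc 1 k, hatX j ω with hSdef
  have hSfun : ∀ k, S k = ∑ j ∈ Finset.Icc 1 k, hatX j := by
    intro k; funext ω; simp [hSdef, Finset.sum_apply]
  have hSL2 : ∀ k, MemLp (S k) 2 P := by
    intro k; rw [hSfun k]; exact memLp_finset_sum' _ (fun j _ => hL2 j)
  have hSint : ∀ k, Integrable (S k) P := fun k => (hSL2 k).integrable one_le_two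
  have hSsm : ∀ k, StronglyMeasurable[ℱ k] (S k) :=
    fun k => by rw [hSfun k]; exact (Finset.stronglyMeasurable_sum _
      (fun j hj => ((hadapt j).mono (ℱ.mono (Finset.mem_Icc.1 hj).2))))
  have hSsucc : ∀ k ω, S (k+1) ω = S k ω + hatX (k+1) ω :=
    fun k ω => Finset.sum_Icc_succ_top (by omega) _
  -- variance of each step
  have hvar : ∀ j, 1 ≤ j → ∫ ω, (hatX j ω)^2 ∂P = σ^2 := by
    intro j
    induction j using Nat.strong_induction_on with
    | _ j ih =>
      intro hj
      match j, hj with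
      | 1, _ => exact hvar1
      | (k+2), _ =>
        have hk : 1 ≤ k + 1 := by omega
        have hkR : (0:ℝ) < (k:ℝ) + 1 := by positivity
        have h := hcond2 (k+1) hk
        have heq : ∫ ω, (hatX (k+2) ω)^2 ∂P
            = ∫ ω, (p * (∑ j ∈ Finset.Icc 1 (k+1), (hatX j ω)^2) / ((k:ℝ)+1)
                + (1-p) * σ^2) ∂P := by
          rw [← integral_condExp (ℱ.le (k+1)) (f := fun ω => (hatX (k+2) ω)^2)]
          refine integral_congr_ae ?_
          filter_upwards [h] with ω hω
          rw [hω]; push_cast; ring_nf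
        have hintsum : Integrable (fun ω => ∑ j ∈ Finset.Icc 1 (k+1), (hatX j ω)^2) P :=
          integrable_finset_sum _ (fun j _ => (hL2 j).integrable_sq)
        have hre : (fun ω => p * (∑ j ∈ Finset.Icc 1 (k+1), (hatX j ω)^2) / ((k:ℝ)+1)
              + (1-p) * σ^2)
            = fun ω => (p / ((k:ℝ)+1)) * (∑ j ∈ Finset.Icc 1 (k+1), (hatX j ω)^2)
              + (1-p) * σ^2 := by
          funext ω; ring
        rw [heq, hre, integral_add ((hintsum.const_mul _)) (integrable_const _),
          integral_const_mul, integral_finset_sum _ (fun j _ => (hL2 j).integrable_sq)]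
        have hterm : ∀ j ∈ Finset.Icc 1 (k+1), ∫ ω, (hatX j ω)^2 ∂P = σ^2 := by
          intro j hj
          obtain ⟨h1, h2⟩ := Finset.mem_Icc.1 hj
          exact ih j (by omega) h1
        rw [Finset.sum_congr rfl hterm, Finset.sum_const, Nat.card_Icc]
        simp only [integral_const, probReal_univ, measure_univ, ENNReal.toReal_one, one_smul,
          smul_eq_mul, nsmul_eq_mul]
        push_cast
        field_simp
        ring
  -- cross term
  have hcross : ∀ k, 1 ≤ k → ∫ ω, S k ω * hatX (k+1) ω ∂P
      = (p / (k:ℝ)) * ∫ ω, (S k ω)^2 ∂P := by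
    intro k hk
    have hintSX : Integrable (fun ω => S k ω * hatX (k+1) ω) P :=
      integrable_mul_of_memL2 (hSL2 k) (hL2 (k+1))
    have hpull : P[S k * hatX (k+1)|ℱ k] =ᵐ[P] S k * P[hatX (k+1)|ℱ k] :=
      condExp_mul_of_stronglyMeasurable_left (hSsm k) hintSX ((hL2 (k+1)).integrable one_le_two)
    calc ∫ ω, S k ω * hatX (k+1) ω ∂P
        = ∫ ω, (P[S k * hatX (k+1)|ℱ k]) ω ∂P := (integral_condExp (ℱ.le k)).symm
      _ = ∫ ω, (p / (k:ℝ)) * (S k ω)^2 ∂P := by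
          refine integral_congr_ae ?_
          filter_upwards [hpull, hcond k hk] with ω h1 h2
          rw [h1, Pi.mul_apply, h2]
          simp only [hSdef]
          ring
      _ = (p / (k:ℝ)) * ∫ ω, (S k ω)^2 ∂P := integral_const_mul _ _
  -- second moment recursion
  have hrec : ∀ k, 1 ≤ k → ∫ ω, (S (k+1) ω)^2 ∂P
      = (1 + 2*p/(k:ℝ)) * ∫ ω, (S k ω)^2 ∂P + σ^2 := by
    intro k hk
    have h1 : Integrable (fun ω => (S k ω)^2) P := (hSL2 k).integrable_sq
    have h2 : Integrable (fun ω => S k ω * hatX (k+1) ω) P :=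
      integrable_mul_of_memL2 (hSL2 k) (hL2 (k+1))
    have h3 : Integrable (fun ω => (hatX (k+1) ω)^2) P := (hL2 (k+1)).integrable_sq
    have h4 : Integrable (fun ω => 2 * (S k ω * hatX (k+1) ω)) P := h2.const_mul 2
    have h12 : Integrable (fun ω => (S k ω)^2 + 2 * (S k ω * hatX (k+1) ω)) P := h1.add h4
    have hexp : (fun ω => (S (k+1) ω)^2)
        = fun ω => ((S k ω)^2 + 2 * (S k ω * hatX (k+1) ω)) + (hatX (k+1) ω)^2 := by
      funext ω; rw [hSsucc k ω]; ring
    rw [hexp, integral_add h12 h3, integral_add h1 h4,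
      integral_const_mul, hcross k hk, hvar (k+1) (by omega)]
    have hkR : (0:ℝ) < (k:ℝ) := by exact_mod_cast hk
    field_simp
  -- second moment bound
  have hSbound : ∀ n, 1 ≤ n → ∫ ω, (S n ω)^2 ∂P
      ≤ σ^2 * ∑ k ∈ Finset.Icc 1 n, ((n:ℝ)/(k:ℝ))^(2*p) := by
    intro n hn
    induction n, hn using Nat.le_induction with
    | base =>
      have hS1 : (fun ω => (S 1 ω)^2) = fun ω => (hatX 1 ω)^2 := by
        funext ω; simp [hSdef]
      rw [hS1, hvar1]
      simp [Real.one_rpow]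
    | succ n hn ih =>
      have hnR : (0:ℝ) < (n:ℝ) := by exact_mod_cast hn
      have hcoef : (0:ℝ) ≤ 1 + 2*p/(n:ℝ) := by positivity
      have key : ∀ k ∈ Finset.Icc 1 n,
          (1 + 2*p/(n:ℝ)) * ((n:ℝ)/(k:ℝ))^(2*p) ≤ (((n:ℝ)+1)/(k:ℝ))^(2*p) := by
        intro k hk
        have hk1 : 1 ≤ k := (Finset.mem_Icc.1 hk).1
        have hkR : (0:ℝ) < (k:ℝ) := by exact_mod_cast hk1
        have hb : 1 + 2*p/(n:ℝ) ≤ (1 + 1/(n:ℝ))^(2*p) := by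
          have h := one_add_mul_self_le_rpow_one_add
            (s := 1/(n:ℝ)) (le_trans (by norm_num : (-1:ℝ) ≤ 0) (by positivity)) h2p1
          calc 1 + 2*p/(n:ℝ) = 1 + (2*p) * (1/(n:ℝ)) := by ring
            _ ≤ (1 + 1/(n:ℝ))^(2*p) := h
        have hsplit : ((n:ℝ)+1)/(k:ℝ) = (1 + 1/(n:ℝ)) * ((n:ℝ)/(k:ℝ)) := by
          field_simp
        rw [hsplit, Real.mul_rpow (by positivity) (by positivity)]
        exact mul_le_mul_of_nonneg_right hb (Real.rpow_nonneg (by positivity) _)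
      have hstep : (1 + 2*p/(n:ℝ)) * (∑ k ∈ Finset.Icc 1 n, ((n:ℝ)/(k:ℝ))^(2*p))
          ≤ ∑ k ∈ Finset.Icc 1 n, (((n:ℝ)+1)/(k:ℝ))^(2*p) := by
        rw [Finset.mul_sum]
        exact Finset.sum_le_sum key
      rw [hrec n hn]
      have hsum_succ : ∑ k ∈ Finset.Icc 1 (n+1), (((n+1:ℕ):ℝ)/(k:ℝ))^(2*p)
          = (∑ k ∈ Finset.Icc 1 n, (((n:ℝ)+1)/(k:ℝ))^(2*p)) + 1 := by
        rw [Finset.sum_Icc_succ_top (by omega)]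
        have h1 : (((n+1:ℕ):ℝ)/((n+1:ℕ):ℝ))^(2*p) = 1 := by
          rw [div_self (by positivity), Real.one_rpow]
        rw [h1]
        have hc : ∀ k ∈ Finset.Icc 1 n,
            (((n+1:ℕ):ℝ)/(k:ℝ))^(2*p) = (((n:ℝ)+1)/(k:ℝ))^(2*p) := by
          intro k _; push_cast; ring_nf
        rw [Finset.sum_congr rfl hc]
      calc (1 + 2*p/(n:ℝ)) * ∫ ω, (S n ω)^2 ∂P + σ^2
          ≤ (1 + 2*p/(n:ℝ)) * (σ^2 * ∑ k ∈ Finset.Icc 1 n, ((n:ℝ)/(k:ℝ))^(2*p)) + σ^2 :=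
            add_le_add_left (mul_le_mul_of_nonneg_left ih hcoef) _
        _ = σ^2 * ((1 + 2*p/(n:ℝ)) * ∑ k ∈ Finset.Icc 1 n, ((n:ℝ)/(k:ℝ))^(2*p)) + σ^2 * 1 := by
            ring
        _ ≤ σ^2 * (∑ k ∈ Finset.Icc 1 n, (((n:ℝ)+1)/(k:ℝ))^(2*p)) + σ^2 * 1 :=
            add_le_add_left (mul_le_mul_of_nonneg_left hstep hσ2) _
        _ = σ^2 * ∑ k ∈ Finset.Icc 1 (n+1), (((n+1:ℕ):ℝ)/(k:ℝ))^(2*p) := by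
            rw [hsum_succ]; ring
  -- the constant
  have hsummable : Summable (fun k : ℕ => 1/(k:ℝ)^(2*p)) :=
    Real.summable_one_div_nat_rpow.2 (by linarith)
  set Z : ℝ := ∑' k : ℕ, 1/(k:ℝ)^(2*p) with hZdef
  have hZ1 : (1:ℝ) ≤ Z := by
    have h := Summable.le_tsum hsummable 1 (fun j _ => by positivity)
    have h1 : (1:ℝ)/((1:ℕ):ℝ)^(2*p) = 1 := by
      simp [Real.one_rpow]
    calc (1:ℝ) = 1/((1:ℕ):ℝ)^(2*p) := h1.symm
      _ ≤ Z := h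
  have hZpos : (0:ℝ) < Z := lt_of_lt_of_le one_pos hZ1
  have hBZ : ∀ n : ℕ, 1 ≤ n →
      ∑ k ∈ Finset.Icc 1 n, ((n:ℝ)/(k:ℝ))^(2*p) ≤ Z * (n:ℝ)^(2*p) := by
    intro n hn
    have hterm : ∀ k ∈ Finset.Icc 1 n,
        ((n:ℝ)/(k:ℝ))^(2*p) = (n:ℝ)^(2*p) * (1/(k:ℝ)^(2*p)) := by
      intro k hk
      have hk1 : 1 ≤ k := (Finset.mem_Icc.1 hk).1
      have hkR : (0:ℝ) < (k:ℝ) := by exact_mod_cast hk1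
      rw [Real.div_rpow (Nat.cast_nonneg n) (le_of_lt hkR)]
      ring
    rw [Finset.sum_congr rfl hterm, ← Finset.mul_sum, mul_comm Z _]
    exact mul_le_mul_of_nonneg_left
      (Summable.sum_le_tsum _ (fun j _ => by positivity) hsummable)
      (Real.rpow_nonneg (Nat.cast_nonneg n) _)
  -- submartingale of |S (k+1)|
  set 𝒢 : Filtration ℕ mΩ :=
    ⟨fun k => ℱ (k+1), fun i j h => ℱ.mono (by omega), fun k => ℱ.le (k+1)⟩ with h𝒢
  set g : ℕ → Ω → ℝ := fun k ω => |S (k+1) ω| with hgdef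
  have hgsm : ∀ k, StronglyMeasurable[𝒢 k] (g k) := by
    intro k
    have h := (hSsm (k+1)).norm
    have : g k = fun ω => ‖S (k+1) ω‖ := by
      funext ω; simp [hgdef, Real.norm_eq_abs]
    rw [this]
    exact h
  have hgint : ∀ k, Integrable (g k) P := fun k => (hSint (k+1)).abs
  have hgL2 : ∀ k, MemLp (g k) 2 P := by
    intro k
    have h := (hSL2 (k+1)).norm
    have : g k = fun ω => ‖S (k+1) ω‖ := by
      funext ω; simp [hgdef, Real.norm_eq_abs]
    rw [this]
    exact h
  have hstepmart : ∀ k : ℕ, g k ≤ᵐ[P] P[g (k+1)|𝒢 k] := by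
    intro k
    have hk1R : (0:ℝ) < (k:ℝ) + 1 := by positivity
    have hce : P[S (k+2)|ℱ (k+1)] =ᵐ[P] fun ω => (1 + p/((k:ℝ)+1)) * S (k+1) ω := by
      have hadd : S (k+2) = S (k+1) + hatX (k+2) := by
        funext ω; rw [hSsucc (k+1) ω]; rfl
      rw [hadd]
      have h1 := condExp_add (μ := P) (m := ℱ (k+1)) (hSint (k+1)) ((hL2 (k+2)).integrable one_le_two)
      have h2 : P[S (k+1)|ℱ (k+1)] = S (k+1) :=
        condExp_of_stronglyMeasurable (ℱ.le (k+1)) (hSsm (k+1)) (hSint (k+1))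
      filter_upwards [h1, hcond (k+1) (by omega)] with ω hω1 hω2
      rw [hω1, Pi.add_apply, h2, hω2]
      simp only [hSdef]
      push_cast
      ring
    have habs := abs_condExp_le_condExp_abs (ℱ.le (k+1)) (hSint (k+2))
    filter_upwards [hce, habs] with ω h1 h2
    have hmul : |S (k+1) ω| ≤ (1 + p/((k:ℝ)+1)) * |S (k+1) ω| :=
      le_mul_of_one_le_left (abs_nonneg _)
        (le_add_of_nonneg_right (by positivity : (0:ℝ) ≤ p/((k:ℝ)+1)))
    calc g k ω = |S (k+1) ω| := rfl
      _ ≤ (1 + p/((k:ℝ)+1)) * |S (k+1) ω| := hmul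
      _ = |(1 + p/((k:ℝ)+1)) * S (k+1) ω| := by
          rw [abs_mul, abs_of_pos (by positivity : (0:ℝ) < 1 + p/((k:ℝ)+1))]
      _ = |(P[S (k+2)|ℱ (k+1)]) ω| := by rw [h1]
      _ ≤ (P[(fun ω => |S (k+2) ω|)|ℱ (k+1)]) ω := h2
      _ = (P[g (k+1)|𝒢 k]) ω := rfl
  have hsubmart : Submartingale g 𝒢 P :=
    submartingale_nat (fun k => hgsm k) (fun k => hgint k) hstepmart
  -- assemble everything
  refine ⟨4 * Z, by positivity, ?_⟩
  intro n hn
  obtain ⟨m, rfl⟩ : ∃ m, n = m + 1 := ⟨n - 1, by omega⟩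
  have hdoob := doob_L2 𝒢 hsubmart (fun k ω => abs_nonneg _) hgL2 m
  have hident : ∀ ω : Ω, (⨆ k ∈ Finset.Icc 1 (m+1), (∑ j ∈ Finset.Icc 1 k, hatX j ω) ^ 2)
      = ((range (m+1)).sup' nonempty_range_add_one (fun k => g k ω))^2 := by
    intro ω
    set T : ℝ := (range (m+1)).sup' nonempty_range_add_one (fun k => g k ω) with hT
    have hTnn : 0 ≤ T :=
      le_trans (abs_nonneg (S 1 ω)) (le_sup' (f := fun k => g k ω) (mem_range.2 (by omega) : 0 ∈ range (m+1)))
    have hTsq : T^2 = (range (m+1)).sup' nonempty_range_add_one (fun k => (S (k+1) ω)^2) := by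
      refine le_antisymm ?_ (Finset.sup'_le _ _ fun j hj => ?_)
      · obtain ⟨i, hi, hieq⟩ := exists_mem_eq_sup'
          (nonempty_range_add_one (n := m)) (fun k => g k ω)
        rw [hT, hieq]
        have : (g i ω)^2 = (S (i+1) ω)^2 := by rw [hgdef]; simp [sq_abs]
        rw [this]
        exact le_sup' (f := fun k => (S (k+1) ω)^2) hi
      · have h1 : g j ω ≤ T := le_sup' (f := fun k => g k ω) hj
        have : (S (j+1) ω)^2 = (g j ω)^2 := by rw [hgdef]; simp [sq_abs]
        rw [this]
        exact pow_le_pow_left₀ (abs_nonneg _) h1 2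
    -- identify the iSup with the finite sup'
    have hub : ∀ k : ℕ, (⨆ _ : k ∈ Finset.Icc 1 (m+1), (S k ω)^2)
        ≤ (range (m+1)).sup' nonempty_range_add_one (fun i => (S (i+1) ω)^2) := by
      intro k
      by_cases hk : k ∈ Finset.Icc 1 (m+1)
      · rw [ciSup_pos hk]
        obtain ⟨h1, h2⟩ := Finset.mem_Icc.1 hk
        obtain ⟨j, rfl⟩ : ∃ j, k = j + 1 := ⟨k - 1, by omega⟩
        exact le_sup' (f := fun i => (S (i+1) ω)^2) (mem_range.2 (by omega))
      · have he : IsEmpty (k ∈ Finset.Icc 1 (m+1) : Prop) := isEmpty_Prop.2 hk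
        rw [Real.iSup_of_isEmpty]
        exact le_trans (sq_nonneg (S 1 ω))
          (le_sup' (f := fun i => (S (i+1) ω)^2) (mem_range.2 (by omega) : 0 ∈ range (m+1)))
    have hbdd : BddAbove (Set.range fun k : ℕ => ⨆ _ : k ∈ Finset.Icc 1 (m+1), (S k ω)^2) := by
      refine ⟨(range (m+1)).sup' nonempty_range_add_one (fun i => (S (i+1) ω)^2), ?_⟩
      rintro x ⟨k, rfl⟩
      exact hub k
    have hiSup : (⨆ k ∈ Finset.Icc 1 (m+1), (S k ω)^2)
        = (range (m+1)).sup' nonempty_range_add_one (fun i => (S (i+1) ω)^2) := by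
      refine le_antisymm (Real.iSup_le hub ?_) (Finset.sup'_le _ _ fun j hj => ?_)
      · exact le_trans (sq_nonneg (S 1 ω))
          (le_sup' (f := fun i => (S (i+1) ω)^2) (mem_range.2 (by omega) : 0 ∈ range (m+1)))
      · have hj' : j < m + 1 := mem_range.1 hj
        have hmem : (j+1) ∈ Finset.Icc 1 (m+1) := by
          rw [Finset.mem_Icc]; exact ⟨by omega, by omega⟩
        calc (S (j+1) ω)^2 = ⨆ _ : (j+1) ∈ Finset.Icc 1 (m+1), (S (j+1) ω)^2 :=
              (ciSup_pos (f := fun _ : (j+1) ∈ Finset.Icc 1 (m+1) => (S (j+1) ω)^2) hmem).symm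
          _ ≤ ⨆ k, ⨆ _ : k ∈ Finset.Icc 1 (m+1), (S k ω)^2 := le_ciSup hbdd (j+1)
    rw [hiSup, hTsq]
  calc ∫ ω, (⨆ k ∈ Finset.Icc 1 (m+1), (∑ j ∈ Finset.Icc 1 k, hatX j ω) ^ 2) ∂P
      = ∫ ω, ((range (m+1)).sup' nonempty_range_add_one (fun k => g k ω))^2 ∂P :=
        integral_congr_ae (.of_forall hident)
    _ ≤ 4 * ∫ ω, (g m ω)^2 ∂P := hdoob
    _ = 4 * ∫ ω, (S (m+1) ω)^2 ∂P := by
        congr 1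
        refine integral_congr_ae (.of_forall fun ω => ?_)
        rw [hgdef]; simp [sq_abs]
    _ ≤ 4 * (σ^2 * ∑ k ∈ Finset.Icc 1 (m+1), (((m+1:ℕ):ℝ)/(k:ℝ))^(2*p)) := by
        have := hSbound (m+1) (by omega)
        linarith
    _ ≤ 4 * (σ^2 * (Z * ((m+1:ℕ):ℝ)^(2*p))) := by
        have := hBZ (m+1) (by omega)
        nlinarith [Real.rpow_nonneg (Nat.cast_nonneg (m+1)) (2*p)]
    _ = 4 * Z * σ^2 * ((m+1:ℕ):ℝ)^(2*p) := by ring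
end

section
/- Suppose $X \in L^2$ is centred and $p = 1/2$. Then $\hat{S}_n / (\sqrt{n}\log n) \to 0$ in $L^2$ as $n \to \infty$. -/
open MeasureTheory ProbabilityTheory Filter Finset

private lemma aux_integrable_mul {Ω : Type*} {mΩ : MeasurableSpace Ω} {P : Measure Ω}
    {f g : Ω → ℝ} (hf : MemLp f 2 P) (hg : MemLp g 2 P) :
    Integrable (fun ω => f ω * g ω) P := by
  refine ((hf.integrable_sq.add hg.integrable_sq).div_const 2).mono'
    (hf.aestronglyMeasurable.mul hg.aestronglyMeasurable) (ae_of_all _ fun ω => ?_)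
  simp only [Real.norm_eq_abs, Pi.add_apply]
  have h1 : |f ω * g ω| = |f ω| * |g ω| := abs_mul _ _
  nlinarith [sq_nonneg (|f ω| - |g ω|), sq_abs (f ω), sq_abs (g ω)]

private lemma aux_sqrt_atTop : Tendsto Real.sqrt atTop atTop := by
  refine tendsto_atTop_atTop_of_monotone (fun x y h => Real.sqrt_le_sqrt h) (fun b => ?_)
  exact ⟨b ^ 2, by rw [Real.sqrt_sq_eq_abs]; exact le_abs_self b⟩

/-- for `p = 1/2`, `Ŝₙ / (√n log n) → 0` in `L²`. -/
theorem reinforced_L2_LLN_critical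
    {Ω : Type*} {mΩ : MeasurableSpace Ω} (P : Measure Ω) [IsProbabilityMeasure P]
    (ℱ : Filtration ℕ mΩ)
    (σ : ℝ) (p : ℝ) (hp : p = 1 / 2)
    (hatX : ℕ → Ω → ℝ)
    (hL2 : ∀ n, MemLp (hatX n) 2 P)
    (hadapt : StronglyAdapted ℱ hatX)
    (hcent : ∫ ω, hatX 1 ω ∂P = 0)
    (hvar1 : ∫ ω, (hatX 1 ω) ^ 2 ∂P = σ ^ 2)
    (hcond : ∀ n : ℕ, 1 ≤ n →
      P[hatX (n + 1) | ℱ n]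
        =ᵐ[P] fun ω => (p / n) * ∑ j ∈ Finset.Icc 1 n, hatX j ω)
    (hcond2 : ∀ n : ℕ, 1 ≤ n →
      P[fun ω => (hatX (n + 1) ω) ^ 2 | ℱ n]
        =ᵐ[P] fun ω => p * (∑ j ∈ Finset.Icc 1 n, (hatX j ω) ^ 2) / n + (1 - p) * σ ^ 2) :
    Tendsto
      (fun n : ℕ =>
        eLpNorm (fun ω => (∑ j ∈ Finset.Icc 1 n, hatX j ω) / (Real.sqrt n * Real.log n)) 2 P)
      atTop (nhds 0) := by
  subst hp
  have hσ2 : (0:ℝ) ≤ σ ^ 2 := sq_nonneg σ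
  set S : ℕ → Ω → ℝ := fun n ω => ∑ j ∈ Finset.Icc 1 n, hatX j ω with hSdef
  have hSapp : ∀ n ω, S n ω = ∑ j ∈ Finset.Icc 1 n, hatX j ω := fun n ω => rfl
  have hSL2 : ∀ n, MemLp (S n) 2 P := fun n => memLp_finset_sum _ (fun j _ => hL2 j)
  have hSM : ∀ n, StronglyMeasurable[ℱ n] (S n) := fun n =>
    Finset.stronglyMeasurable_fun_sum _ (fun j hj =>
      ((hadapt j).mono (ℱ.mono (Finset.mem_Icc.mp hj).2)))
  have hXsq_int : ∀ n, Integrable (fun ω => (hatX n ω) ^ 2) P := fun n => (hL2 n).integrable_sq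
  -- step 1 : all variances are σ²
  have hvar : ∀ n, 1 ≤ n → ∫ ω, (hatX n ω) ^ 2 ∂P = σ ^ 2 := by
    intro n
    induction n using Nat.strong_induction_on with
    | _ n IH =>
      intro hn
      rcases Nat.lt_or_ge n 2 with h2 | h2
      · interval_cases n
        exact hvar1
      · obtain ⟨m, rfl⟩ : ∃ m, n = m + 1 := ⟨n - 1, by omega⟩
        have hm : 1 ≤ m := by omega
        calc ∫ ω, (hatX (m + 1) ω) ^ 2 ∂P
            = ∫ ω, (P[fun ω => (hatX (m + 1) ω) ^ 2 | ℱ m]) ω ∂P :=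
              (integral_condExp (ℱ.le m)).symm
          _ = ∫ ω, ((1/2 : ℝ) * (∑ j ∈ Finset.Icc 1 m, (hatX j ω) ^ 2) / m
                + (1 - 1/2) * σ ^ 2) ∂P := integral_congr_ae (hcond2 m hm)
          _ = σ ^ 2 := by
              rw [integral_add
                (((integrable_finset_sum _ (fun j _ => hXsq_int j)).const_mul _).div_const _)
                (integrable_const _), integral_const, integral_div, integral_const_mul,
                integral_finset_sum _ (fun j _ => hXsq_int j)]
              rw [Finset.sum_congr rfl (fun j hj => IH j
                (by have := (Finset.mem_Icc.mp hj).2; omega) (Finset.mem_Icc.mp hj).1)]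
              rw [Finset.sum_const, Nat.card_Icc]
              have hm0 : (m : ℝ) ≠ 0 := Nat.cast_ne_zero.mpr (by omega)
              simp only [measure_univ, probReal_univ, ENNReal.toReal_one, smul_eq_mul, one_smul,
                nsmul_eq_mul, Nat.add_sub_cancel]
              field_simp
              ring
  -- step 2 : the cross term
  have hcross : ∀ n, 1 ≤ n →
      ∫ ω, S n ω * hatX (n + 1) ω ∂P = ((1:ℝ)/(2 * n)) * ∫ ω, (S n ω) ^ 2 ∂P := by
    intro n hn
    have hint : Integrable (fun ω => S n ω * hatX (n + 1) ω) P :=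
      aux_integrable_mul (hSL2 n) (hL2 (n + 1))
    have hX1 : Integrable (hatX (n + 1)) P := (hL2 (n + 1)).integrable one_le_two
    have hpull : P[(fun ω => S n ω * hatX (n + 1) ω) | ℱ n]
        =ᵐ[P] fun ω => S n ω * (P[hatX (n + 1) | ℱ n]) ω :=
      condExp_mul_of_stronglyMeasurable_left (μ := P) (hSM n) hint hX1
    have heq : P[(fun ω => S n ω * hatX (n + 1) ω) | ℱ n]
        =ᵐ[P] fun ω => ((1:ℝ)/(2 * n)) * (S n ω) ^ 2 := by
      filter_upwards [hpull, hcond n hn] with ω h1 h2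
      rw [h1, h2, ← hSapp]
      push_cast
      ring
    calc ∫ ω, S n ω * hatX (n + 1) ω ∂P
        = ∫ ω, (P[(fun ω => S n ω * hatX (n + 1) ω) | ℱ n]) ω ∂P :=
          (integral_condExp (ℱ.le n)).symm
      _ = ∫ ω, ((1:ℝ)/(2 * n)) * (S n ω) ^ 2 ∂P := integral_congr_ae heq
      _ = ((1:ℝ)/(2 * n)) * ∫ ω, (S n ω) ^ 2 ∂P := integral_const_mul _ _
  -- step 3 : recursion for a n = E[S n ^ 2]
  set a : ℕ → ℝ := fun n => ∫ ω, (S n ω) ^ 2 ∂P with hadef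
  have ha1 : a 1 = σ ^ 2 := by
    have h : ∀ ω, (S 1 ω) ^ 2 = (hatX 1 ω) ^ 2 := fun ω => by rw [hSapp]; simp
    calc a 1 = ∫ ω, (hatX 1 ω) ^ 2 ∂P := integral_congr_ae (ae_of_all _ h)
      _ = σ ^ 2 := hvar1
  have hrec : ∀ n, 1 ≤ n → a (n + 1) = (1 + 1/(n:ℝ)) * a n + σ ^ 2 := by
    intro n hn
    have hstep : ∀ ω, S (n + 1) ω = S n ω + hatX (n + 1) ω := fun ω => by
      rw [hSapp, hSapp, Finset.sum_Icc_succ_top (by omega)]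
    have hint2 := (hSL2 n).integrable_sq
    have hintX := (hL2 (n + 1)).integrable_sq
    have hintc := aux_integrable_mul (hSL2 n) (hL2 (n + 1))
    have hintc' : Integrable (fun ω => 2 * (S n ω * hatX (n + 1) ω)) P := hintc.const_mul 2
    have hintA : Integrable (fun ω => (S n ω) ^ 2 + 2 * (S n ω * hatX (n + 1) ω)) P :=
      hint2.add hintc'
    have hexp : a (n + 1)
        = ∫ ω, ((S n ω) ^ 2 + 2 * (S n ω * hatX (n + 1) ω) + (hatX (n + 1) ω) ^ 2) ∂P := by
      refine integral_congr_ae (ae_of_all _ fun ω => ?_)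
      simp only [hstep ω]; ring
    rw [hexp, integral_add hintA hintX,
      integral_add hint2 hintc', integral_const_mul, hcross n hn,
      hvar (n + 1) (by omega)]
    have hn0 : (n : ℝ) ≠ 0 := Nat.cast_ne_zero.mpr (by omega)
    field_simp
    ring
  -- step 4 : closed form a n = σ² n H n
  have hclosed : ∀ n, 1 ≤ n →
      a n = σ ^ 2 * n * (∑ j ∈ Finset.Icc 1 n, ((j:ℝ))⁻¹) := by
    intro n hn
    induction n, hn using Nat.le_induction with
    | base => simpa using ha1
    | succ n hn IH =>
      rw [hrec n hn, IH, Finset.sum_Icc_succ_top (by omega)]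
      have hn0 : (n : ℝ) ≠ 0 := Nat.cast_ne_zero.mpr (by omega)
      have hn1 : ((n : ℝ) + 1) ≠ 0 := by positivity
      push_cast
      field_simp
  -- harmonic bounds
  have hHnonneg : ∀ n : ℕ, 0 ≤ ∑ j ∈ Finset.Icc 1 n, ((j:ℝ))⁻¹ :=
    fun n => Finset.sum_nonneg fun j _ => by positivity
  have hHle : ∀ n : ℕ, (∑ j ∈ Finset.Icc 1 n, ((j:ℝ))⁻¹) ≤ 1 + Real.log n := by
    intro n
    have h1 : (∑ j ∈ Finset.Icc 1 n, ((j:ℝ))⁻¹) = ((harmonic n : ℚ) : ℝ) := by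
      rw [harmonic_eq_sum_Icc]
      push_cast
      rfl
    rw [h1]
    exact harmonic_le_one_add_log n
  -- step 5 : bound the eLpNorm for n ≥ 3
  have key : ∀ n : ℕ, 3 ≤ n →
      eLpNorm (fun ω => (∑ j ∈ Finset.Icc 1 n, hatX j ω) / (Real.sqrt n * Real.log n)) 2 P
        ≤ ENNReal.ofReal (Real.sqrt (2 * σ ^ 2) / Real.sqrt (Real.log n)) := by
    intro n hn3
    have hn1 : 1 ≤ n := by omega
    have hnpos : (0:ℝ) < n := by positivity
    have hn3' : (3:ℝ) ≤ n := by exact_mod_cast hn3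
    have hL1 : 1 ≤ Real.log n := by
      rw [Real.le_log_iff_exp_le hnpos]
      calc Real.exp 1 ≤ 2.7182818286 := Real.exp_one_lt_d9.le
        _ ≤ 3 := by norm_num
        _ ≤ n := hn3'
    have hLpos : 0 < Real.log n := lt_of_lt_of_le one_pos hL1
    set d : ℝ := Real.sqrt n * Real.log n with hd
    have hdpos : 0 < d := mul_pos (Real.sqrt_pos.mpr hnpos) hLpos
    have hfeq : (fun ω => (∑ j ∈ Finset.Icc 1 n, hatX j ω) / d)
        = fun ω => d⁻¹ * S n ω := funext fun ω => by rw [← hSapp, div_eq_inv_mul]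
    have hfL2 : MemLp (fun ω => (∑ j ∈ Finset.Icc 1 n, hatX j ω) / d) 2 P := by
      rw [hfeq]; exact (hSL2 n).const_mul _
    rw [hfL2.eLpNorm_eq_integral_rpow_norm two_ne_zero ENNReal.ofNat_ne_top]
    -- compute the integral
    have htoReal : (2 : ENNReal).toReal = (2:ℝ) := by norm_num
    have hI : (∫ ω, ‖(∑ j ∈ Finset.Icc 1 n, hatX j ω) / d‖ ^ (2:ENNReal).toReal ∂P)
        = a n / d ^ 2 := by
      rw [htoReal]
      have : ∀ ω, ‖(∑ j ∈ Finset.Icc 1 n, hatX j ω) / d‖ ^ (2:ℝ)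
          = (S n ω) ^ 2 / d ^ 2 := by
        intro ω
        rw [Real.rpow_two, Real.norm_eq_abs, sq_abs, ← hSapp, div_pow]
      rw [integral_congr_ae (ae_of_all _ this), integral_div]
    rw [hI]
    refine ENNReal.ofReal_le_ofReal ?_
    have hd2 : d ^ 2 = n * (Real.log n) ^ 2 := by
      rw [hd, mul_pow, Real.sq_sqrt hnpos.le]
    have hIval : a n / d ^ 2 ≤ 2 * σ ^ 2 / Real.log n := by
      rw [hclosed n hn1, hd2]
      have h1 : σ ^ 2 * n * (∑ j ∈ Finset.Icc 1 n, ((j:ℝ))⁻¹)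
          ≤ σ ^ 2 * n * (2 * Real.log n) := by
        refine mul_le_mul_of_nonneg_left ?_ (by positivity)
        calc (∑ j ∈ Finset.Icc 1 n, ((j:ℝ))⁻¹) ≤ 1 + Real.log n := hHle n
          _ ≤ 2 * Real.log n := by linarith
      calc σ ^ 2 * n * (∑ j ∈ Finset.Icc 1 n, ((j:ℝ))⁻¹) / (n * (Real.log n) ^ 2)
          ≤ σ ^ 2 * n * (2 * Real.log n) / (n * (Real.log n) ^ 2) :=
            (div_le_div_iff_of_pos_right (by positivity)).mpr h1
        _ = 2 * σ ^ 2 / Real.log n := by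
            field_simp
    have hInn : 0 ≤ a n / d ^ 2 := by
      rw [hclosed n hn1]
      positivity
    calc (a n / d ^ 2) ^ (2:ENNReal).toReal⁻¹
        = Real.sqrt (a n / d ^ 2) := by
          rw [htoReal, Real.sqrt_eq_rpow]
          norm_num
      _ ≤ Real.sqrt (2 * σ ^ 2 / Real.log n) := Real.sqrt_le_sqrt hIval
      _ = Real.sqrt (2 * σ ^ 2) / Real.sqrt (Real.log n) := Real.sqrt_div (by positivity) _
  -- step 6 : conclusion
  have hb : Tendsto (fun n : ℕ => Real.sqrt (2 * σ ^ 2) / Real.sqrt (Real.log n))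
      atTop (nhds 0) :=
    Tendsto.div_atTop tendsto_const_nhds
      (aux_sqrt_atTop.comp (Real.tendsto_log_atTop.comp tendsto_natCast_atTop_atTop))
  refine tendsto_of_tendsto_of_tendsto_of_le_of_le' tendsto_const_nhds ?_
    (Eventually.of_forall fun n => zero_le) (eventually_atTop.mpr ⟨3, key⟩)
  simpa using ENNReal.tendsto_ofReal hb
end
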